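/- arXiv:2605.02518 — 3 statements merged into one kernel-verified Lean document; each statement's English description precedes it below -/
import Mathlib

section
/- Let q be a positive integer, G = SL₂(ℤ/qℤ), and μ : G → ℂ any function. For Q | q define μ_Q(x) = (1/|K_Q|)·Σ_{y ≡ x (mod Q)} μ(y) and f_Q = Σ_{d | rad(Q)} μ̃(d)·μ_{Q/d}, where rad(Q) is the radical of Q and μ̃ is the Möbius function. Then for every divisor Q of q: (i) f_Q(x) = f_Q(y) whenever x ≡ y (mod Q); and (ii) for every divisor q′ of Q with q′ ≠ Q and every x ∈ G, Σ_{y ∈ G, y ≡ x (mod q′)} f_Q(y) = 0. That is, f_Q lies in the space H_Q. -/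
open scoped Classical

/-- `SL₂(ℤ/qℤ)`. -/
abbrev SL2 (q : ℕ) := Matrix.SpecialLinearGroup (Fin 2) (ZMod q)

/-- `y ≡ x (mod Q)`: the entrywise reductions of `x` and `y` modulo `Q` agree. -/
def redEq (q Q : ℕ) (x y : SL2 q) : Prop :=
  ∀ i j, (ZMod.cast ((x : Matrix (Fin 2) (Fin 2) (ZMod q)) i j) : ZMod Q) =
    ZMod.cast ((y : Matrix (Fin 2) (Fin 2) (ZMod q)) i j)

/-- The congruence class of `x` modulo `Q` in `SL₂(ℤ/qℤ)`. -/
noncomputable def cclass (q : ℕ) [NeZero q] (Q : ℕ) (x : SL2 q) : Finset (SL2 q) :=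
  Finset.univ.filter (fun y => redEq q Q x y)

/-- `K_Q`, the kernel of reduction mod `Q`, i.e. the congruence class of `1` mod `Q`. -/
noncomputable def KQ (q : ℕ) [NeZero q] (Q : ℕ) : Finset (SL2 q) :=
  cclass q Q 1

/-- `μ_Q(x) = (1/|K_Q|)·Σ_{y ≡ x (mod Q)} μ(y)`. -/
noncomputable def muQ (q : ℕ) [NeZero q] (Q : ℕ) (μ : SL2 q → ℂ) (x : SL2 q) : ℂ :=
  (1 / ((KQ q Q).card : ℂ)) * ∑ y ∈ cclass q Q x, μ y

/-- The radical of `Q`: the product of its distinct prime divisors. -/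
def rad (Q : ℕ) : ℕ := ∏ p ∈ Q.primeFactors, p

/-- `f_Q = Σ_{d | rad(Q)} μ̃(d)·μ_{Q/d}`, with `μ̃` the Möbius function. -/
noncomputable def fQ (q : ℕ) [NeZero q] (Q : ℕ) (μ : SL2 q → ℂ) (x : SL2 q) : ℂ :=
  ∑ d ∈ (rad Q).divisors, ((ArithmeticFunction.moebius d : ℤ) : ℂ) * muQ q (Q / d) μ x

namespace AuxHQ

lemma sl2_ext {m : ℕ} {A B : SL2 m}
    (h : ∀ i j, (A : Matrix (Fin 2) (Fin 2) (ZMod m)) i j = B i j) : A = B :=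
  Subtype.ext (Matrix.ext h)

lemma int_cast_zmod_eq_of_dvd {m : ℕ} [NeZero m] {w : ℤ} {e : ZMod m}
    (h : (m : ℤ) ∣ w - (e.val : ℤ)) : ((w : ℤ) : ZMod m) = e := by
  have h0 : ((w - (e.val : ℤ) : ℤ) : ZMod m) = 0 := (ZMod.intCast_zmod_eq_zero_iff_dvd _ _).2 h
  push_cast at h0
  rw [sub_eq_zero] at h0
  rw [h0, ZMod.natCast_val, ZMod.cast_id]

lemma lift_aux (m : ℕ) [NeZero m] (a b c d : ℤ) (hdet : (m : ℤ) ∣ a * d - b * c - 1) :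
    ∃ a' b' c' d' : ℤ, a' * d' - b' * c' = 1 ∧ (m : ℤ) ∣ a' - a ∧ (m : ℤ) ∣ b' - b ∧
      (m : ℤ) ∣ c' - c ∧ (m : ℤ) ∣ d' - d := by
  obtain ⟨c₀, hc₀, hc₀m⟩ : ∃ c₀ : ℤ, c₀ ≠ 0 ∧ (m : ℤ) ∣ c₀ - c := by
    by_cases hcz : c = 0
    · exact ⟨(m : ℤ), by exact_mod_cast (NeZero.ne m), by rw [hcz]; simp⟩
    · exact ⟨c, hcz, by simp⟩
  set S : Finset ℕ := c₀.natAbs.primeFactors.filter (fun p => ¬ (p : ℤ) ∣ d) with hS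
  set t : ℤ := ∏ p ∈ S, (p : ℤ) with ht
  set d₁ : ℤ := d + t * m with hd₁
  have hdvd1 : (m : ℤ) ∣ d₁ - d := ⟨t, by rw [hd₁]; ring⟩
  have hcop : IsCoprime c₀ d₁ := by
    rw [Int.isCoprime_iff_gcd_eq_one]
    by_contra hg
    obtain ⟨r, hr, hrdvd⟩ := Nat.exists_prime_and_dvd hg
    have hrc : (r : ℤ) ∣ c₀ := dvd_trans (Int.natCast_dvd_natCast.2 hrdvd) (Int.gcd_dvd_left _ _)
    have hrd₁ : (r : ℤ) ∣ d₁ := dvd_trans (Int.natCast_dvd_natCast.2 hrdvd) (Int.gcd_dvd_right _ _)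
    have hrprime : Prime (r : ℤ) := Nat.prime_iff_prime_int.1 hr
    by_cases hrd : (r : ℤ) ∣ d
    · have hrt : ¬ (r : ℤ) ∣ t := by
        intro hdvdt
        obtain ⟨p, hpS, hrp⟩ := (Prime.dvd_finset_prod_iff hrprime _).1 hdvdt
        have hpprime : p.Prime := Nat.prime_of_mem_primeFactors (Finset.mem_filter.1 hpS).1
        have hrpeq : r = p :=
          (Nat.prime_dvd_prime_iff_eq hr hpprime).1 (Int.natCast_dvd_natCast.1 hrp)
        exact (Finset.mem_filter.1 hpS).2 (hrpeq ▸ hrd)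
      have hrm : ¬ (r : ℤ) ∣ (m : ℤ) := by
        intro hrm
        have hrc' : (r : ℤ) ∣ c := by
          have := dvd_sub hrc (hrm.trans hc₀m)
          simpa using this
        have h1 : (r : ℤ) ∣ a * d - b * c - 1 := hrm.trans hdet
        have h2 : (r : ℤ) ∣ a * d - b * c := dvd_sub (hrd.mul_left a) (hrc'.mul_left b)
        have : (r : ℤ) ∣ 1 := by
          have := dvd_sub h2 h1
          simpa using this
        exact hrprime.not_unit (isUnit_of_dvd_one this)
      have htm : (r : ℤ) ∣ t * m := by
        have := dvd_sub hrd₁ hrd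
        simpa [hd₁] using this
      rcases hrprime.2.2 _ _ htm with h | h
      · exact hrt h
      · exact hrm h
    · have hrc0 : r ∣ c₀.natAbs := by
        have := Int.natAbs_dvd_natAbs.2 hrc
        simpa using this
      have hrS : r ∈ S := by
        rw [hS, Finset.mem_filter]
        exact ⟨Nat.mem_primeFactors.2 ⟨hr, hrc0, Int.natAbs_ne_zero.2 hc₀⟩, hrd⟩
      have hrt : (r : ℤ) ∣ t := by
        rw [ht]; exact Finset.dvd_prod_of_mem _ hrS
      have : (r : ℤ) ∣ d := by
        have := dvd_sub hrd₁ (hrt.mul_right m)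
        simpa [hd₁] using this
      exact hrd this
  have h5 : (m : ℤ) ∣ a * d₁ - b * c₀ - 1 := by
    have he : a * d₁ - b * c₀ - 1
        = (a * d - b * c - 1) + a * (d₁ - d) - b * (c₀ - c) := by ring
    rw [he]
    exact dvd_sub (dvd_add hdet (hdvd1.mul_left a)) (hc₀m.mul_left b)
  obtain ⟨k, hk⟩ := h5
  obtain ⟨u, v, huv⟩ := hcop
  refine ⟨a - m * k * v, b + m * k * u, c₀, d₁, ?_, ⟨-(k * v), by ring⟩,
    ⟨k * u, by ring⟩, hc₀m, hdvd1⟩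
  linear_combination hk - ((m : ℤ) * k) * huv

lemma exists_SL2Z_lift (m : ℕ) [NeZero m] (M : SL2 m) :
    ∃ Y : Matrix.SpecialLinearGroup (Fin 2) ℤ,
      Matrix.SpecialLinearGroup.map (Int.castRingHom (ZMod m)) Y = M := by
  have hMdet : (M : Matrix (Fin 2) (Fin 2) (ZMod m)) 0 0 * M.1 1 1 - M.1 0 1 * M.1 1 0 = 1 := by
    rw [← Matrix.det_fin_two]; exact M.prop
  have hdet : (m : ℤ) ∣ ((M.1 0 0).val : ℤ) * ((M.1 1 1).val : ℤ)
      - ((M.1 0 1).val : ℤ) * ((M.1 1 0).val : ℤ) - 1 := by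
    rw [← ZMod.intCast_zmod_eq_zero_iff_dvd]
    push_cast [ZMod.natCast_val, ZMod.cast_id]
    rw [hMdet]
    ring
  obtain ⟨a', b', c', d', hdet1, h1, h2, h3, h4⟩ :=
    lift_aux m ((M.1 0 0).val : ℤ) ((M.1 0 1).val : ℤ) ((M.1 1 0).val : ℤ) ((M.1 1 1).val : ℤ)
      hdet
  refine ⟨⟨!![a', b'; c', d'], by rw [Matrix.det_fin_two_of]; exact hdet1⟩, ?_⟩
  apply sl2_ext
  intro i j
  show ((Int.castRingHom (ZMod m)).mapMatrix !![a', b'; c', d']) i j = (M : Matrix (Fin 2) (Fin 2) (ZMod m)) i j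
  rw [RingHom.mapMatrix_apply]
  fin_cases i <;> fin_cases j <;>
    simp only [Matrix.map_apply, Matrix.cons_val', Matrix.cons_val_zero, Matrix.cons_val_one,
      Matrix.head_cons, Matrix.empty_val', Matrix.cons_val_fin_one, Matrix.head_fin_const,
      Matrix.of_apply, Int.coe_castRingHom, Fin.zero_eta, Fin.mk_one, Fin.isValue]
  · exact int_cast_zmod_eq_of_dvd h1
  · exact int_cast_zmod_eq_of_dvd h2
  · exact int_cast_zmod_eq_of_dvd h3
  · exact int_cast_zmod_eq_of_dvd h4


/-- Reduction homomorphism. -/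
def red {q : ℕ} (m : ℕ) (h : m ∣ q) : SL2 q →* SL2 m :=
  Matrix.SpecialLinearGroup.map (ZMod.castHom h (ZMod m))

lemma red_coe {q m : ℕ} (h : m ∣ q) (x : SL2 q) (i j : Fin 2) :
    ((red m h x : Matrix (Fin 2) (Fin 2) (ZMod m)) i j)
      = ZMod.cast ((x : Matrix (Fin 2) (Fin 2) (ZMod q)) i j) := by
  simp [red, Matrix.SpecialLinearGroup.map_apply_coe, RingHom.mapMatrix_apply,
    Matrix.map_apply, ZMod.castHom_apply]

lemma redEq_iff {q m : ℕ} (h : m ∣ q) (x y : SL2 q) :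
    redEq q m x y ↔ red m h x = red m h y := by
  constructor
  · intro hxy
    exact sl2_ext fun i j => by rw [red_coe, red_coe]; exact hxy i j
  · intro hxy i j
    have := congrArg (fun z : SL2 m => (z : Matrix (Fin 2) (Fin 2) (ZMod m)) i j) hxy
    simpa [red_coe] using this

lemma red_red {q m g : ℕ} (hm : m ∣ q) (hg : g ∣ m) (y : SL2 q) :
    red g (hg.trans hm) y = red g hg (red m hm y) := by
  apply sl2_ext
  intro i j
  rw [red_coe, red_coe, red_coe, ← ZMod.castHom_apply (h := hg.trans hm),
    ← ZMod.castHom_apply (h := hg), ← ZMod.castHom_apply (h := hm),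
    ← RingHom.comp_apply, ZMod.castHom_comp]

lemma red_surj {q : ℕ} [NeZero q] {m : ℕ} (h : m ∣ q) :
    Function.Surjective (red (q := q) m h) := by
  haveI : NeZero m := ⟨fun h0 => NeZero.ne q (Nat.eq_zero_of_zero_dvd (h0 ▸ h))⟩
  intro M
  obtain ⟨Y, hY⟩ := exists_SL2Z_lift m M
  refine ⟨Matrix.SpecialLinearGroup.map (Int.castRingHom (ZMod q)) Y, ?_⟩
  rw [← hY]
  apply sl2_ext
  intro i j
  rw [red_coe, ← ZMod.castHom_apply (h := h)]
  simp [Matrix.SpecialLinearGroup.map_apply_coe, RingHom.mapMatrix_apply, Matrix.map_apply]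

lemma ne_zero_of_dvd {q : ℕ} [NeZero q] {n : ℕ} (h : n ∣ q) : NeZero n :=
  ⟨fun h0 => NeZero.ne q (Nat.eq_zero_of_zero_dvd (h0 ▸ h))⟩

lemma red_eq_of_both {q a b : ℕ} [NeZero q] (ha : a ∣ q) (hb : b ∣ q) {u v : SL2 q}
    (hA : red a ha u = red a ha v) (hB : red b hb u = red b hb v) :
    red (Nat.lcm a b) (Nat.lcm_dvd ha hb) u = red (Nat.lcm a b) (Nat.lcm_dvd ha hb) v := by
  apply sl2_ext
  intro i j
  have hA' := congrArg (fun z : SL2 a => (z : Matrix (Fin 2) (Fin 2) (ZMod a)) i j) hA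
  have hB' := congrArg (fun z : SL2 b => (z : Matrix (Fin 2) (Fin 2) (ZMod b)) i j) hB
  simp only [red_coe] at hA' hB' ⊢
  set e := (u : Matrix (Fin 2) (Fin 2) (ZMod q)) i j with he
  set f := (v : Matrix (Fin 2) (Fin 2) (ZMod q)) i j with hf
  have hval : ∀ n, ∀ hn : n ∣ q, (ZMod.cast e : ZMod n) = ZMod.cast f → n ∣ (e - f).val := by
    intro n hn hef
    haveI : NeZero n := ne_zero_of_dvd hn
    rw [← ZMod.natCast_eq_zero_iff _ n, ZMod.natCast_val, ZMod.cast_sub hn, hef,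
      sub_self]
  have hL : Nat.lcm a b ∣ (e - f).val := Nat.lcm_dvd (hval a ha hA') (hval b hb hB')
  haveI : NeZero (Nat.lcm a b) := ne_zero_of_dvd (Nat.lcm_dvd ha hb)
  have : (ZMod.cast (e - f) : ZMod (Nat.lcm a b)) = 0 := by
    rw [← ZMod.natCast_val, ZMod.natCast_eq_zero_iff]
    exact hL
  rw [ZMod.cast_sub (Nat.lcm_dvd ha hb), sub_eq_zero] at this
  exact this

lemma det_cast_eq_one {n : ℕ} (W : Matrix (Fin 2) (Fin 2) ℤ) (A : SL2 n)
    (h : ∀ i j, ((W i j : ℤ) : ZMod n) = (A : Matrix (Fin 2) (Fin 2) (ZMod n)) i j) :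
    ((W.det : ℤ) : ZMod n) = 1 := by
  have h2 := RingHom.map_det (Int.castRingHom (ZMod n)) W
  have h3 : (Int.castRingHom (ZMod n)).mapMatrix W = W.map (Int.cast : ℤ → ZMod n) := rfl
  have hmap : W.map (Int.cast : ℤ → ZMod n) = A := by
    ext i j; rw [Matrix.map_apply]; exact h i j
  rw [h3, hmap, A.prop] at h2
  exact h2

lemma int_crt (a b : ℕ) (r s : ℤ) (h : ((Nat.gcd a b : ℕ) : ℤ) ∣ r - s) :
    ∃ w : ℤ, (a : ℤ) ∣ w - r ∧ (b : ℤ) ∣ w - s := by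
  obtain ⟨k, hk⟩ := h
  have hbez : ((Nat.gcd a b : ℕ) : ℤ) = a * Int.gcdA a b + b * Int.gcdB a b := by
    have := Int.gcd_eq_gcd_ab (a : ℤ) (b : ℤ)
    simpa [Int.gcd_natCast_natCast] using this
  refine ⟨r - a * Int.gcdA a b * k, ⟨-(Int.gcdA a b * k), by ring⟩, ⟨Int.gcdB a b * k, ?_⟩⟩
  have : r - s = (a * Int.gcdA a b + b * Int.gcdB a b) * k := by rw [← hbez]; exact hk
  linear_combination this

/-- CRT for `SL₂`. -/
lemma crt_sl2 {q : ℕ} [NeZero q] {a b : ℕ} (ha : a ∣ q) (hb : b ∣ q) (x z : SL2 q)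
    (hxz : red (Nat.gcd a b) ((Nat.gcd_dvd_left a b).trans ha) x
      = red (Nat.gcd a b) ((Nat.gcd_dvd_left a b).trans ha) z) :
    ∃ y : SL2 q, red a ha y = red a ha x ∧ red b hb y = red b hb z := by
  set g := Nat.gcd a b with hg
  set L := Nat.lcm a b with hL
  have hLq : L ∣ q := Nat.lcm_dvd ha hb
  haveI : NeZero a := ne_zero_of_dvd ha
  haveI : NeZero b := ne_zero_of_dvd hb
  haveI : NeZero L := ne_zero_of_dvd hLq
  haveI : NeZero g := ne_zero_of_dvd ((Nat.gcd_dvd_left a b).trans ha)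
  -- integer entries
  set ξ : Fin 2 → Fin 2 → ℤ := fun i j => (((x : Matrix (Fin 2) (Fin 2) (ZMod q)) i j).val : ℤ)
    with hξ
  set ζ : Fin 2 → Fin 2 → ℤ := fun i j => (((z : Matrix (Fin 2) (Fin 2) (ZMod q)) i j).val : ℤ)
    with hζ
  have hcastξ : ∀ (n : ℕ) (hn : n ∣ q) (i j : Fin 2),
      ((ξ i j : ℤ) : ZMod n) = ((red n hn x : Matrix (Fin 2) (Fin 2) (ZMod n)) i j) := by
    intro n hn i j
    rw [red_coe, hξ]
    rw [Int.cast_natCast, ZMod.natCast_val]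
  have hcastζ : ∀ (n : ℕ) (hn : n ∣ q) (i j : Fin 2),
      ((ζ i j : ℤ) : ZMod n) = ((red n hn z : Matrix (Fin 2) (Fin 2) (ZMod n)) i j) := by
    intro n hn i j
    rw [red_coe, hζ]
    rw [Int.cast_natCast, ZMod.natCast_val]
  have hgd : ∀ i j, ((g : ℕ) : ℤ) ∣ ξ i j - ζ i j := by
    intro i j
    rw [← ZMod.intCast_zmod_eq_zero_iff_dvd]
    push_cast only [Int.cast_sub]
    rw [hcastξ g ((Nat.gcd_dvd_left a b).trans ha), hcastζ g ((Nat.gcd_dvd_left a b).trans ha),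
      hxz, sub_self]
  choose w hwa hwb using fun i j => int_crt a b (ξ i j) (ζ i j) (hgd i j)
  set W : Matrix (Fin 2) (Fin 2) ℤ := Matrix.of w with hW
  have hWa : ∀ i j, ((W i j : ℤ) : ZMod a) = ((red a ha x : Matrix (Fin 2) (Fin 2) (ZMod a)) i j) := by
    intro i j
    rw [← hcastξ a ha]
    rw [← sub_eq_zero, ← Int.cast_sub, ZMod.intCast_zmod_eq_zero_iff_dvd]
    exact hwa i j
  have hWb : ∀ i j, ((W i j : ℤ) : ZMod b) = ((red b hb z : Matrix (Fin 2) (Fin 2) (ZMod b)) i j) := by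
    intro i j
    rw [← hcastζ b hb]
    rw [← sub_eq_zero, ← Int.cast_sub, ZMod.intCast_zmod_eq_zero_iff_dvd]
    exact hwb i j
  have hdeta : (a : ℤ) ∣ W.det - 1 := by
    rw [← ZMod.intCast_zmod_eq_zero_iff_dvd]
    push_cast only [Int.cast_sub, Int.cast_one]
    rw [det_cast_eq_one W (red a ha x) hWa, sub_self]
  have hdetb : (b : ℤ) ∣ W.det - 1 := by
    rw [← ZMod.intCast_zmod_eq_zero_iff_dvd]
    push_cast only [Int.cast_sub, Int.cast_one]
    rw [det_cast_eq_one W (red b hb z) hWb, sub_self]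
  have hdetL : ((L : ℕ) : ℤ) ∣ W.det - 1 := by
    have := Int.natCast_dvd.2 (Nat.lcm_dvd (Int.natCast_dvd.1 hdeta) (Int.natCast_dvd.1 hdetb))
    simpa [Int.lcm, hL] using this
  have hdetL' : (W.map (Int.cast : ℤ → ZMod L)).det = 1 := by
    have h2 := RingHom.map_det (Int.castRingHom (ZMod L)) W
    have h3 : (Int.castRingHom (ZMod L)).mapMatrix W = W.map (Int.cast : ℤ → ZMod L) := rfl
    rw [h3] at h2
    rw [← h2]
    show ((W.det : ℤ) : ZMod L) = 1
    rw [← sub_eq_zero, ← Int.cast_one, ← Int.cast_sub, ZMod.intCast_zmod_eq_zero_iff_dvd]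
    exact hdetL
  set ML : SL2 L := ⟨W.map (Int.cast : ℤ → ZMod L), hdetL'⟩ with hML
  obtain ⟨y, hy⟩ := red_surj hLq ML
  refine ⟨y, ?_, ?_⟩
  · rw [red_red hLq (Nat.dvd_lcm_left a b) y, hy]
    apply sl2_ext
    intro i j
    rw [red_coe, ← ZMod.castHom_apply (h := Nat.dvd_lcm_left a b), hML]
    show (ZMod.castHom (Nat.dvd_lcm_left a b) (ZMod a)) ((W i j : ℤ) : ZMod L) = _
    rw [map_intCast]
    exact hWa i j
  · rw [red_red hLq (Nat.dvd_lcm_right a b) y, hy]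
    apply sl2_ext
    intro i j
    rw [red_coe, ← ZMod.castHom_apply (h := Nat.dvd_lcm_right a b), hML]
    show (ZMod.castHom (Nat.dvd_lcm_right a b) (ZMod b)) ((W i j : ℤ) : ZMod L) = _
    rw [map_intCast]
    exact hWb i j

lemma cclass_eq {q : ℕ} [NeZero q] {m : ℕ} (h : m ∣ q) (x : SL2 q) :
    cclass q m x = Finset.univ.filter (fun y => red m h y = red m h x) := by
  ext y
  simp only [cclass, Finset.mem_filter, Finset.mem_univ, true_and]
  rw [redEq_iff h, eq_comm]

lemma KQ_eq {q : ℕ} [NeZero q] {m : ℕ} (h : m ∣ q) :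
    KQ q m = Finset.univ.filter (fun y => red m h y = 1) := by
  rw [KQ, cclass_eq h]
  simp

lemma card_fiber {q : ℕ} [NeZero q] {m : ℕ} (h : m ∣ q) (M : SL2 m) :
    (Finset.univ.filter (fun y : SL2 q => red m h y = M)).card = (KQ q m).card := by
  obtain ⟨x₀, rfl⟩ := red_surj h M
  rw [KQ_eq h]
  apply Finset.card_nbij' (fun y => x₀⁻¹ * y) (fun y => x₀ * y)
  · intro y hy
    simp only [Finset.mem_coe, Finset.mem_filter, Finset.mem_univ, true_and] at hy ⊢
    rw [map_mul, map_inv, hy, inv_mul_cancel]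
  · intro y hy
    simp only [Finset.mem_coe, Finset.mem_filter, Finset.mem_univ, true_and] at hy ⊢
    rw [map_mul, hy, mul_one]
  · intro y _; simp [mul_assoc]
  · intro y _; simp [← mul_assoc]

lemma card_cclass {q : ℕ} [NeZero q] {m : ℕ} (h : m ∣ q) (x : SL2 q) :
    (cclass q m x).card = (KQ q m).card := by
  rw [cclass_eq h]
  exact card_fiber h (red m h x)

lemma KQ_card_pos {q : ℕ} [NeZero q] {m : ℕ} (h : m ∣ q) : 0 < (KQ q m).card := by
  refine Finset.card_pos.2 ⟨1, ?_⟩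
  rw [KQ_eq h]
  simp

lemma card_univ_eq {q : ℕ} [NeZero q] {m : ℕ} [NeZero m] (h : m ∣ q) :
    Fintype.card (SL2 q) = Fintype.card (SL2 m) * (KQ q m).card := by
  classical
  rw [← Finset.card_univ, Finset.card_eq_sum_card_fiberwise
    (f := red m h) (t := Finset.univ) (fun x _ => Finset.mem_univ _)]
  rw [Finset.sum_congr rfl (fun M _ => card_fiber h M), Finset.sum_const,
    smul_eq_mul, Finset.card_univ]

lemma red_inj_of_dvd {q : ℕ} [NeZero q] {L : ℕ} (hLq : L ∣ q) (hqL : q ∣ L) {u v : SL2 q}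
    (h : red L hLq u = red L hLq v) : u = v := by
  apply sl2_ext
  intro i j
  have h' := congrArg (fun z : SL2 L => (z : Matrix (Fin 2) (Fin 2) (ZMod L)) i j) h
  simp only [red_coe] at h'
  set e := (u : Matrix (Fin 2) (Fin 2) (ZMod q)) i j with he
  set f := (v : Matrix (Fin 2) (Fin 2) (ZMod q)) i j with hf
  haveI : NeZero L := ne_zero_of_dvd hLq
  have hdvd : L ∣ (e - f).val := by
    rw [← ZMod.natCast_eq_zero_iff _ L, ZMod.natCast_val, ZMod.cast_sub hLq, h',
      sub_self]
  have hq : q ∣ (e - f).val := hqL.trans hdvd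
  have hval0 : (e - f).val = 0 := Nat.eq_zero_of_dvd_of_lt hq (ZMod.val_lt _)
  have : e - f = 0 := (ZMod.val_eq_zero _).1 hval0
  rw [← sub_eq_zero]
  exact this

lemma card_SL2_mul {m n : ℕ} [NeZero m] [NeZero n] (h : Nat.Coprime m n) :
    Fintype.card (SL2 (m * n)) = Fintype.card (SL2 m) * Fintype.card (SL2 n) := by
  haveI : NeZero (m * n) := ⟨mul_ne_zero (NeZero.ne m) (NeZero.ne n)⟩
  rw [← Fintype.card_prod]
  apply Fintype.card_of_bijective
    (f := fun y : SL2 (m * n) =>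
      (red m (dvd_mul_right m n) y, red n (dvd_mul_left n m) y))
  constructor
  · intro u v huv
    rw [Prod.mk.injEq] at huv
    have h3 := red_eq_of_both (dvd_mul_right m n) (dvd_mul_left n m) huv.1 huv.2
    have hL : m * n ∣ Nat.lcm m n := by
      rw [Nat.Coprime.lcm_eq_mul h]
    exact red_inj_of_dvd _ hL h3
  · rintro ⟨u, v⟩
    obtain ⟨x, hx⟩ := red_surj (dvd_mul_right m n) u
    obtain ⟨z, hz⟩ := red_surj (dvd_mul_left n m) v
    have hg1 : Nat.gcd m n = 1 := h
    haveI : Subsingleton (SL2 (Nat.gcd m n)) := by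
      rw [hg1]
      exact ⟨fun a b => sl2_ext fun i j => Subsingleton.elim _ _⟩
    obtain ⟨y, hy1, hy2⟩ := crt_sl2 (dvd_mul_right m n) (dvd_mul_left n m) x z
      (Subsingleton.elim _ _)
    exact ⟨y, by rw [Prod.mk.injEq, hy1, hy2, hx, hz]; exact ⟨rfl, rfl⟩⟩

/-- The arithmetic function `n ↦ |SL₂(ℤ/nℤ)|`. -/
noncomputable def Fcard : ArithmeticFunction ℕ :=
  ⟨fun n => if n = 0 then 0 else Nat.card (SL2 n), by simp⟩

lemma Fcard_apply {n : ℕ} [NeZero n] : Fcard n = Fintype.card (SL2 n) := by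
  show (if n = 0 then 0 else Nat.card (SL2 n)) = _
  rw [if_neg (NeZero.ne n), Nat.card_eq_fintype_card]

lemma isMult_Fcard : Fcard.IsMultiplicative := by
  constructor
  · haveI : Unique (SL2 1) :=
      { default := 1, uniq := fun a => sl2_ext fun i j => Subsingleton.elim _ _ }
    rw [Fcard_apply, Fintype.card_unique]
  · intro m n hmn
    by_cases hm : m = 0
    · subst hm; rw [zero_mul, ArithmeticFunction.map_zero, zero_mul]
    by_cases hn : n = 0
    · subst hn; rw [mul_zero, ArithmeticFunction.map_zero, mul_zero]
    haveI : NeZero m := ⟨hm⟩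
    haveI : NeZero n := ⟨hn⟩
    haveI : NeZero (m * n) := ⟨mul_ne_zero hm hn⟩
    rw [Fcard_apply, Fcard_apply, Fcard_apply]
    exact card_SL2_mul hmn

lemma K_mul_identity {q : ℕ} [NeZero q] {a b : ℕ} (ha : a ∣ q) (hb : b ∣ q) :
    (KQ q a).card * (KQ q b).card
      = (KQ q (Nat.gcd a b)).card * (KQ q (Nat.lcm a b)).card := by
  haveI : NeZero a := ne_zero_of_dvd ha
  haveI : NeZero b := ne_zero_of_dvd hb
  have hgq : Nat.gcd a b ∣ q := (Nat.gcd_dvd_left a b).trans ha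
  have hLq : Nat.lcm a b ∣ q := Nat.lcm_dvd ha hb
  haveI : NeZero (Nat.gcd a b) := ne_zero_of_dvd hgq
  haveI : NeZero (Nat.lcm a b) := ne_zero_of_dvd hLq
  have hFa := card_univ_eq (q := q) ha
  have hFb := card_univ_eq (q := q) hb
  have hFg := card_univ_eq (q := q) hgq
  have hFL := card_univ_eq (q := q) hLq
  have hmul : Fintype.card (SL2 (Nat.lcm a b)) * Fintype.card (SL2 (Nat.gcd a b))
      = Fintype.card (SL2 a) * Fintype.card (SL2 b) := by
    have h0 := isMult_Fcard.lcm_apply_mul_gcd_apply (x := a) (y := b)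
    rwa [Fcard_apply, Fcard_apply, Fcard_apply, Fcard_apply] at h0
  have e1 : (Fintype.card (SL2 a) * Fintype.card (SL2 b))
      * ((KQ q a).card * (KQ q b).card)
      = Fintype.card (SL2 q) * Fintype.card (SL2 q) := by
    calc Fintype.card (SL2 a) * Fintype.card (SL2 b) * ((KQ q a).card * (KQ q b).card)
        = (Fintype.card (SL2 a) * (KQ q a).card)
          * (Fintype.card (SL2 b) * (KQ q b).card) := by ring
      _ = Fintype.card (SL2 q) * Fintype.card (SL2 q) := by rw [← hFa, ← hFb]
  have e2 : (Fintype.card (SL2 a) * Fintype.card (SL2 b))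
      * ((KQ q (Nat.gcd a b)).card * (KQ q (Nat.lcm a b)).card)
      = Fintype.card (SL2 q) * Fintype.card (SL2 q) := by
    rw [← hmul]
    calc Fintype.card (SL2 (Nat.lcm a b)) * Fintype.card (SL2 (Nat.gcd a b))
          * ((KQ q (Nat.gcd a b)).card * (KQ q (Nat.lcm a b)).card)
        = (Fintype.card (SL2 (Nat.gcd a b)) * (KQ q (Nat.gcd a b)).card)
          * (Fintype.card (SL2 (Nat.lcm a b)) * (KQ q (Nat.lcm a b)).card) := by ring
      _ = Fintype.card (SL2 q) * Fintype.card (SL2 q) := by rw [← hFg, ← hFL]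
  have hpos : 0 < Fintype.card (SL2 a) * Fintype.card (SL2 b) :=
    Nat.mul_pos Fintype.card_pos Fintype.card_pos
  exact Nat.eq_of_mul_eq_mul_left hpos (e1.trans e2.symm)

lemma count_classes {q : ℕ} [NeZero q] {a b : ℕ} (ha : a ∣ q) (hb : b ∣ q) (x z : SL2 q) :
    (Finset.univ.filter
        (fun y : SL2 q => red a ha y = red a ha x ∧ red b hb z = red b hb y)).card
      = if red (Nat.gcd a b) ((Nat.gcd_dvd_left a b).trans ha) z
            = red (Nat.gcd a b) ((Nat.gcd_dvd_left a b).trans ha) x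
        then (KQ q (Nat.lcm a b)).card else 0 := by
  have hgq : Nat.gcd a b ∣ q := (Nat.gcd_dvd_left a b).trans ha
  have hLq : Nat.lcm a b ∣ q := Nat.lcm_dvd ha hb
  split_ifs with hzx
  · obtain ⟨y₀, hy₀a, hy₀b⟩ := crt_sl2 ha hb x z hzx.symm
    have hset : Finset.univ.filter
          (fun y : SL2 q => red a ha y = red a ha x ∧ red b hb z = red b hb y)
        = Finset.univ.filter (fun y : SL2 q =>
            red (Nat.lcm a b) hLq y = red (Nat.lcm a b) hLq y₀) := by
      ext y
      simp only [Finset.mem_filter, Finset.mem_univ, true_and]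
      constructor
      · rintro ⟨h1, h2⟩
        exact red_eq_of_both ha hb (h1.trans hy₀a.symm) (h2.symm.trans hy₀b.symm)
      · intro h1
        constructor
        · rw [red_red hLq (Nat.dvd_lcm_left a b) y, h1, ← red_red hLq (Nat.dvd_lcm_left a b) y₀,
            hy₀a]
        · rw [red_red hLq (Nat.dvd_lcm_right a b) y, h1,
            ← red_red hLq (Nat.dvd_lcm_right a b) y₀, hy₀b]
    rw [hset]
    exact card_fiber hLq _
  · rw [Finset.card_eq_zero, Finset.filter_eq_empty_iff]
    rintro y - ⟨h1, h2⟩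
    refine hzx ?_
    rw [red_red hb (Nat.gcd_dvd_right a b) z, h2, ← red_red hb (Nat.gcd_dvd_right a b) y,
      red_red ha (Nat.gcd_dvd_left a b) y, h1, ← red_red ha (Nat.gcd_dvd_left a b) x]

lemma sum_muQ_class {q : ℕ} [NeZero q] {c m : ℕ} (hc : c ∣ q) (hm : m ∣ q)
    (μ : SL2 q → ℂ) (x : SL2 q) :
    ∑ y ∈ cclass q c x, muQ q m μ y
      = ((KQ q c).card : ℂ) * muQ q (Nat.gcd c m) μ x := by
  have hgq : Nat.gcd c m ∣ q := (Nat.gcd_dvd_left c m).trans hc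
  have hLq : Nat.lcm c m ∣ q := Nat.lcm_dvd hc hm
  have hkm : ((KQ q m).card : ℂ) ≠ 0 := Nat.cast_ne_zero.2 (KQ_card_pos hm).ne'
  have hkg : ((KQ q (Nat.gcd c m)).card : ℂ) ≠ 0 := Nat.cast_ne_zero.2 (KQ_card_pos hgq).ne'
  have step1 : ∑ y ∈ cclass q c x, muQ q m μ y
      = (1 / ((KQ q m).card : ℂ)) * ∑ y ∈ cclass q c x, ∑ z ∈ cclass q m y, μ z := by
    rw [Finset.mul_sum]
    exact Finset.sum_congr rfl fun y _ => rfl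
  have step2 : ∀ y : SL2 q, ∑ z ∈ cclass q m y, μ z
      = ∑ z ∈ Finset.univ, if red m hm z = red m hm y then μ z else 0 := by
    intro y
    rw [cclass_eq hm, Finset.sum_filter]
  have step3 : ∑ y ∈ cclass q c x, ∑ z ∈ cclass q m y, μ z
      = ∑ z ∈ Finset.univ, (((cclass q c x).filter
          (fun y => red m hm z = red m hm y)).card : ℂ) * μ z := by
    rw [Finset.sum_congr rfl (fun y _ => step2 y), Finset.sum_comm]
    refine Finset.sum_congr rfl (fun z _ => ?_)
    rw [← Finset.sum_filter, Finset.sum_const, nsmul_eq_mul]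
  have step4 : ∀ z : SL2 q, ((cclass q c x).filter
        (fun y => red m hm z = red m hm y)).card
      = if red (Nat.gcd c m) hgq z = red (Nat.gcd c m) hgq x
        then (KQ q (Nat.lcm c m)).card else 0 := by
    intro z
    rw [cclass_eq hc, Finset.filter_filter]
    exact count_classes hc hm x z
  have step5 : ∑ z ∈ Finset.univ, (((cclass q c x).filter
          (fun y => red m hm z = red m hm y)).card : ℂ) * μ z
      = ((KQ q (Nat.lcm c m)).card : ℂ) * ∑ z ∈ cclass q (Nat.gcd c m) x, μ z := by
    rw [Finset.mul_sum, cclass_eq hgq, Finset.sum_filter]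
    refine Finset.sum_congr rfl (fun z _ => ?_)
    rw [step4 z]
    split_ifs <;> simp
  rw [step1, step3, step5]
  simp only [muQ]
  have hkk : ((KQ q c).card : ℂ) * ((KQ q m).card : ℂ)
      = ((KQ q (Nat.gcd c m)).card : ℂ) * ((KQ q (Nat.lcm c m)).card : ℂ) := by
    rw [← Nat.cast_mul, ← Nat.cast_mul, K_mul_identity hc hm]
  field_simp
  linear_combination (-1 : ℂ) * (∑ z ∈ cclass q (Nat.gcd c m) x, μ z) * hkk

lemma squarefree_rad (Q : ℕ) : Squarefree (rad Q) := by
  rw [Nat.squarefree_iff_prime_squarefree]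
  intro r hr hdvd
  have hr' : Prime r := hr.prime
  have hrrad : r ∣ rad Q := (dvd_mul_right r r).trans hdvd
  obtain ⟨s, hs, hrs⟩ := (hr'.dvd_finset_prod_iff _).1 hrrad
  have hseq : s = r := ((Nat.prime_of_mem_primeFactors hs).dvd_iff_eq hr.ne_one).1 hrs
  have hs : r ∈ Q.primeFactors := hseq ▸ hs
  rw [rad, ← Finset.mul_prod_erase _ _ hs] at hdvd
  have : r ∣ ∏ p ∈ Q.primeFactors.erase r, p := by
    rcases hdvd with ⟨e, he⟩
    refine ⟨e, ?_⟩
    have hr0 : r ≠ 0 := hr.ne_zero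
    have := he
    rw [mul_assoc] at this
    exact Nat.eq_of_mul_eq_mul_left hr.pos this
  obtain ⟨s', hs', hrs'⟩ := (hr'.dvd_finset_prod_iff _).1 this
  have heq : s' = r := ((Nat.prime_of_mem_primeFactors (Finset.mem_of_mem_erase hs')).dvd_iff_eq
    hr.ne_one).1 hrs'
  exact (Finset.ne_of_mem_erase hs') heq

lemma gcd_div_eq {Q q' p d : ℕ} (hQ0 : Q ≠ 0) (hq'0 : q' ≠ 0) (hp : p.Prime)
    (hlt : q'.factorization p < Q.factorization p)
    (hpd : ¬ p ∣ d) (hdpQ : d * p ∣ Q) :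
    Nat.gcd q' (Q / d) = Nat.gcd q' (Q / (d * p)) := by
  have hd0 : d ≠ 0 := by
    rintro rfl
    rw [zero_mul] at hdpQ
    exact hQ0 (Nat.eq_zero_of_zero_dvd hdpQ)
  have hdp0 : d * p ≠ 0 := mul_ne_zero hd0 hp.ne_zero
  have hdQ : d ∣ Q := (dvd_mul_right d p).trans hdpQ
  have hQd0 : Q / d ≠ 0 :=
    (Nat.div_pos (Nat.le_of_dvd (Nat.pos_of_ne_zero hQ0) hdQ) (Nat.pos_of_ne_zero hd0)).ne'
  have hQdp0 : Q / (d * p) ≠ 0 :=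
    (Nat.div_pos (Nat.le_of_dvd (Nat.pos_of_ne_zero hQ0) hdpQ) (Nat.pos_of_ne_zero hdp0)).ne'
  apply Nat.eq_of_factorization_eq (Nat.gcd_ne_zero_left hq'0) (Nat.gcd_ne_zero_left hq'0)
  intro r
  rw [Nat.factorization_gcd hq'0 hQd0, Nat.factorization_gcd hq'0 hQdp0,
    Finsupp.inf_apply, Finsupp.inf_apply, Nat.factorization_div hdQ,
    Nat.factorization_div hdpQ, Finsupp.tsub_apply, Finsupp.tsub_apply,
    Nat.factorization_mul hd0 hp.ne_zero, Finsupp.add_apply, hp.factorization,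
    Finsupp.single_apply]
  have hdr0 : d.factorization p = 0 := Nat.factorization_eq_zero_of_not_dvd hpd
  rcases eq_or_ne p r with rfl | hrp
  · rw [if_pos rfl, hdr0]
    change min _ _ = min _ _
    omega
  · rw [if_neg hrp, add_zero]

lemma part_i {q : ℕ} [NeZero q] (μ : SL2 q → ℂ) {Q : ℕ} (hQ : Q ∣ q) (x y : SL2 q)
    (hxy : redEq q Q x y) : fQ q Q μ x = fQ q Q μ y := by
  unfold fQ
  refine Finset.sum_congr rfl fun d hd => ?_
  have hdQ : d ∣ Q := (Nat.mem_divisors.1 hd).1.trans (Nat.prod_primeFactors_dvd Q)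
  have hQdQ : Q / d ∣ Q := Nat.div_dvd_of_dvd hdQ
  have hQdq : Q / d ∣ q := hQdQ.trans hQ
  have hredQ : red Q hQ x = red Q hQ y := (redEq_iff hQ x y).1 hxy
  have hred : red (Q / d) hQdq x = red (Q / d) hQdq y := by
    rw [red_red hQ hQdQ x, red_red hQ hQdQ y, hredQ]
  have hcl : cclass q (Q / d) x = cclass q (Q / d) y := by
    rw [cclass_eq hQdq, cclass_eq hQdq, hred]
  rw [muQ, muQ, hcl]

lemma part_ii {q : ℕ} [NeZero q] (μ : SL2 q → ℂ) {Q : ℕ} (hQ : Q ∣ q) {q' : ℕ}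
    (hq'Q : q' ∣ Q) (hne : q' ≠ Q) (x : SL2 q) :
    ∑ y ∈ cclass q q' x, fQ q Q μ y = 0 := by
  have hQ0 : Q ≠ 0 := (ne_zero_of_dvd hQ).ne
  have hq'q : q' ∣ q := hq'Q.trans hQ
  have hq'0 : q' ≠ 0 := (ne_zero_of_dvd hq'q).ne
  have hradQ : rad Q ∣ Q := Nat.prod_primeFactors_dvd Q
  have hrad0 : rad Q ≠ 0 := fun h => hQ0 (Nat.eq_zero_of_zero_dvd (h ▸ hradQ))
  have hswap : ∑ y ∈ cclass q q' x, fQ q Q μ y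
      = ∑ d ∈ (rad Q).divisors, ((ArithmeticFunction.moebius d : ℤ) : ℂ)
          * (((KQ q q').card : ℂ) * muQ q (Nat.gcd q' (Q / d)) μ x) := by
    unfold fQ
    rw [Finset.sum_comm]
    refine Finset.sum_congr rfl fun d hd => ?_
    have hdQ : d ∣ Q := (Nat.mem_divisors.1 hd).1.trans hradQ
    have hQdq : Q / d ∣ q := (Nat.div_dvd_of_dvd hdQ).trans hQ
    rw [← Finset.mul_sum, sum_muQ_class hq'q hQdq μ x]
  rw [hswap]
  obtain ⟨p, hp, hlt⟩ : ∃ p, p.Prime ∧ q'.factorization p < Q.factorization p := by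
    by_contra hcon
    push_neg at hcon
    apply hne
    have hle1 : q'.factorization ≤ Q.factorization :=
      (Nat.factorization_le_iff_dvd hq'0 hQ0).2 hq'Q
    apply Nat.eq_of_factorization_eq hq'0 hQ0
    intro r
    by_cases hr : r.Prime
    · exact le_antisymm (Finsupp.le_def.1 hle1 r) (hcon r hr)
    · rw [Nat.factorization_eq_zero_of_not_prime _ hr, Nat.factorization_eq_zero_of_not_prime _ hr]
  have hpQ : p ∈ Q.primeFactors :=
    Nat.mem_primeFactors.2 ⟨hp, Nat.dvd_of_factorization_pos (by omega), hQ0⟩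
  have hprad : p ∣ rad Q := Finset.dvd_prod_of_mem _ hpQ
  have hsq : Squarefree (rad Q) := squarefree_rad Q
  set F : ℕ → ℂ := fun d => ((ArithmeticFunction.moebius d : ℤ) : ℂ)
      * (((KQ q q').card : ℂ) * muQ q (Nat.gcd q' (Q / d)) μ x) with hF
  show ∑ d ∈ (rad Q).divisors, F d = 0
  rw [← Finset.sum_filter_add_sum_filter_not ((rad Q).divisors) (fun d => p ∣ d)]
  have hbij : ∑ d ∈ (rad Q).divisors.filter (fun d => p ∣ d), F d
      = ∑ d ∈ (rad Q).divisors.filter (fun d => ¬ p ∣ d), F (d * p) := by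
    refine Finset.sum_nbij' (fun d => d / p) (fun d => d * p) ?_ ?_ ?_ ?_ ?_
    · intro d hd
      rw [Finset.mem_filter, Nat.mem_divisors] at hd ⊢
      obtain ⟨⟨hdrad, -⟩, hpd⟩ := hd
      have hdp : d / p ∣ d := Nat.div_dvd_of_dvd hpd
      refine ⟨⟨hdp.trans hdrad, hrad0⟩, fun hcon => ?_⟩
      have : p * p ∣ d := by
        obtain ⟨e, he⟩ := hcon
        exact ⟨e, by rw [← Nat.div_mul_cancel hpd, he]; ring⟩
      exact hp.not_isUnit (hsq p (this.trans hdrad))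
    · intro d hd
      rw [Finset.mem_filter, Nat.mem_divisors] at hd ⊢
      obtain ⟨⟨hdrad, -⟩, hpd⟩ := hd
      have hcop : Nat.Coprime p d := (Nat.Prime.coprime_iff_not_dvd hp).2 hpd
      refine ⟨⟨?_, hrad0⟩, dvd_mul_left p d⟩
      rw [mul_comm]
      exact hcop.mul_dvd_of_dvd_of_dvd hprad hdrad
    · intro d hd
      rw [Finset.mem_filter] at hd
      exact Nat.div_mul_cancel hd.2
    · intro d hd
      rw [Nat.mul_div_assoc d (dvd_refl p), Nat.div_self hp.pos, mul_one]
    · intro d hd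
      rw [Finset.mem_filter] at hd
      rw [Nat.div_mul_cancel hd.2]
  rw [hbij, ← Finset.sum_add_distrib]
  apply Finset.sum_eq_zero
  intro d hd
  rw [Finset.mem_filter, Nat.mem_divisors] at hd
  obtain ⟨⟨hdrad, -⟩, hpd⟩ := hd
  have hd0 : d ≠ 0 := fun h => hrad0 (Nat.eq_zero_of_zero_dvd (h ▸ hdrad))
  have hcop : Nat.Coprime p d := (Nat.Prime.coprime_iff_not_dvd hp).2 hpd
  have hdprad : d * p ∣ rad Q := by
    rw [mul_comm]
    exact hcop.mul_dvd_of_dvd_of_dvd hprad hdrad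
  have hdpQ : d * p ∣ Q := hdprad.trans hradQ
  have hmoeb : ArithmeticFunction.moebius (d * p) = - ArithmeticFunction.moebius d := by
    rw [ArithmeticFunction.isMultiplicative_moebius.map_mul_of_coprime hcop.symm,
      ArithmeticFunction.moebius_apply_prime hp]
    ring
  have hgcdeq : Nat.gcd q' (Q / d) = Nat.gcd q' (Q / (d * p)) :=
    gcd_div_eq hQ0 hq'0 hp hlt hpd hdpQ
  rw [hF]
  simp only
  rw [hmoeb, ← hgcdeq]
  push_cast
  ring

end AuxHQ

/-- **`f_Q` lies in the space `H_Q`:** it is constant on congruence classes mod `Q`,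
and its sum over any congruence class mod `q′` vanishes for every proper divisor
`q′` of `Q`. -/
theorem fQ_mem_HQ (q : ℕ) [NeZero q] (μ : SL2 q → ℂ) (Q : ℕ) (hQ : Q ∣ q) :
    (∀ x y : SL2 q, redEq q Q x y → fQ q Q μ x = fQ q Q μ y) ∧
    (∀ q' : ℕ, q' ∣ Q → q' ≠ Q → ∀ x : SL2 q,
      ∑ y ∈ cclass q q' x, fQ q Q μ y = 0) := by
  constructor
  · intro x y hxy
    exact AuxHQ.part_i μ hQ x y hxy
  · intro q' hq' hne x
    exact AuxHQ.part_ii μ hQ hq' hne x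
end

section
/- Let q be a positive integer, G = SL₂(ℤ/qℤ), and μ : G → ℂ any function. For a divisor Q of q define μ_Q(x) = (1/|K_Q|)·Σ_{y ∈ G, y ≡ x (mod Q)} μ(y). Then for any divisors q₁, q₂ of q, one has the convolution identity μ_{q₁} ∗ μ_{q₂} = μ_{d} ∗ μ_{d}, where d = gcd(q₁, q₂) and (f ∗ g)(x) = Σ_{y ∈ G} f(y)·g(y⁻¹x). -/
open scoped Classical

/-- Convolution of two functions on `SL₂(ℤ/qℤ)`. -/
noncomputable def conv (q : ℕ) [NeZero q] (f g : SL2 q → ℂ) : SL2 q → ℂ :=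
  fun x => ∑ y, f y * g (y⁻¹ * x)

namespace MuAux

open Finset Matrix

/-- Reduction mod `Q` as a group hom. -/
noncomputable def pi (q Q : ℕ) [NeZero q] (hQ : Q ∣ q) : SL2 q →* SL2 Q :=
  Matrix.SpecialLinearGroup.map (ZMod.castHom hQ (ZMod Q))

variable {q : ℕ} [NeZero q]

lemma pi_coe {Q : ℕ} (hQ : Q ∣ q) (x : SL2 q) (i j : Fin 2) :
    (pi q Q hQ x : Matrix (Fin 2) (Fin 2) (ZMod Q)) i j
      = (ZMod.cast ((x : Matrix (Fin 2) (Fin 2) (ZMod q)) i j) : ZMod Q) := by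
  simp [pi, ZMod.castHom_apply]

lemma redEq_iff {Q : ℕ} (hQ : Q ∣ q) (x y : SL2 q) :
    redEq q Q x y ↔ pi q Q hQ x = pi q Q hQ y := by
  constructor
  · intro h
    apply Subtype.ext
    ext i j
    rw [pi_coe hQ, pi_coe hQ, h i j]
  · intro h i j
    have := congrArg (fun z : SL2 Q => (z : Matrix (Fin 2) (Fin 2) (ZMod Q)) i j) h
    simpa [pi_coe hQ] using this

lemma redEq_refl (Q : ℕ) (x : SL2 q) : redEq q Q x x := fun _ _ => rfl

lemma pi_trans {Q₁ Q₂ : ℕ} (h12 : Q₁ ∣ Q₂) (h2q : Q₂ ∣ q) (x : SL2 q) :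
    pi q Q₁ (h12.trans h2q) x
      = Matrix.SpecialLinearGroup.map (ZMod.castHom h12 (ZMod Q₁)) (pi q Q₂ h2q x) := by
  apply Subtype.ext
  ext i j
  have := RingHom.congr_fun (ZMod.castHom_comp h12 h2q)
    ((x : Matrix (Fin 2) (Fin 2) (ZMod q)) i j)
  simp only [pi, Matrix.SpecialLinearGroup.map_apply_coe, RingHom.mapMatrix_apply,
    Matrix.map_apply]
  exact (this.symm)

/-- Key arithmetic lemma: adjust `c` modulo `l` to become coprime (jointly with `d`) to `q`. -/
lemma exists_coprime_aux (q : ℕ) (hq : q ≠ 0) (l c d : ℤ)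
    (h : ∀ p : ℕ, p.Prime → (p : ℤ) ∣ l → (p : ℤ) ∣ c → (p : ℤ) ∣ d → False) :
    ∃ t : ℤ, Nat.Coprime (Int.gcd (c + l * t) d) q := by
  classical
  set s : Finset ℕ := q.primeFactors.filter (fun p => (p : ℤ) ∣ d ∧ ¬ (p : ℤ) ∣ c) with hs
  refine ⟨((∏ p ∈ s, p : ℕ) : ℤ), Nat.coprime_of_dvd fun p pp hpg hpq => ?_⟩
  have hpInt : Prime (p : ℤ) := Nat.prime_iff_prime_int.mp pp
  have hg1 : (p : ℤ) ∣ c + l * (∏ p ∈ s, p : ℕ) :=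
    dvd_trans (Int.natCast_dvd_natCast.mpr hpg) (Int.gcd_dvd_left _ _)
  have hpd : (p : ℤ) ∣ d :=
    dvd_trans (Int.natCast_dvd_natCast.mpr hpg) (Int.gcd_dvd_right _ _)
  by_cases hc : (p : ℤ) ∣ c
  · have hpt : ¬ p ∣ ∏ p ∈ s, p := by
      intro hdvd
      obtain ⟨r, hr, hpr⟩ := (Nat.Prime.prime pp).exists_mem_finset_dvd hdvd
      have hr' := Finset.mem_filter.mp hr
      have : p = r := ((Nat.prime_dvd_prime_iff_eq pp
        (Nat.prime_of_mem_primeFactors hr'.1)).mp hpr)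
      exact hr'.2.2 (this ▸ hc)
    have hlt : (p : ℤ) ∣ l * (∏ p ∈ s, p : ℕ) := by
      have := dvd_sub hg1 hc
      simpa using this
    rcases hpInt.dvd_mul.mp hlt with hh | hh
    · exact h p pp hh hc hpd
    · exact hpt (Int.natCast_dvd_natCast.mp hh)
  · have hps : p ∈ s := by
      rw [hs, Finset.mem_filter]
      exact ⟨Nat.mem_primeFactors.mpr ⟨pp, hpq, hq⟩, hpd, hc⟩
    have hpt : (p : ℤ) ∣ (∏ p ∈ s, p : ℕ) :=
      Int.natCast_dvd_natCast.mpr (Finset.dvd_prod_of_mem id hps)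
    have hlt : (p : ℤ) ∣ l * (∏ p ∈ s, p : ℕ) := hpt.mul_left l
    exact hc (by simpa using dvd_sub hg1 hlt)

lemma bezout3 {a b : ℤ} {n : ℕ} (h : Nat.Coprime (Int.gcd a b) n) :
    ∃ α β γ : ℤ, α * a + β * b + γ * (n : ℤ) = 1 := by
  have h1 : ((Nat.gcd (Int.gcd a b) n : ℕ) : ℤ)
      = (Int.gcd a b : ℤ) * Nat.gcdA (Int.gcd a b) n + (n : ℤ) * Nat.gcdB (Int.gcd a b) n :=
    Nat.gcd_eq_gcd_ab _ _
  rw [Nat.Coprime] at h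
  rw [h, Nat.cast_one] at h1
  have h2 : (Int.gcd a b : ℤ) = a * Int.gcdA a b + b * Int.gcdB a b := Int.gcd_eq_gcd_ab a b
  refine ⟨Int.gcdA a b * Nat.gcdA (Int.gcd a b) n, Int.gcdB a b * Nat.gcdA (Int.gcd a b) n,
    Nat.gcdB (Int.gcd a b) n, ?_⟩
  rw [h2] at h1
  linarith [h1]

/-- Surjectivity of reduction `SL₂(ℤ/q) → SL₂(ℤ/l)` for `l ∣ q`. -/
lemma sl2_lift {l : ℕ} (hl : l ∣ q) : Function.Surjective (pi q l hl) := by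
  intro B
  have hq : q ≠ 0 := NeZero.ne q
  have hl0 : l ≠ 0 := by rintro rfl; exact hq (Nat.eq_zero_of_zero_dvd hl)
  haveI : NeZero l := ⟨hl0⟩
  set M : Matrix (Fin 2) (Fin 2) (ZMod l) := (B : Matrix (Fin 2) (Fin 2) (ZMod l)) with hM
  set a₀ : ℤ := ((M 0 0).val : ℤ) with ha₀
  set b₀ : ℤ := ((M 0 1).val : ℤ) with hb₀
  set c₀ : ℤ := ((M 1 0).val : ℤ) with hc₀
  set d₀ : ℤ := ((M 1 1).val : ℤ) with hd₀
  have cast_back : ∀ u : ZMod l, ((u.val : ℤ) : ZMod l) = u := by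
    intro u; rw [Int.cast_natCast, ZMod.natCast_val, ZMod.cast_id]
  have hdetM : M 0 0 * M 1 1 - M 0 1 * M 1 0 = 1 := by
    have h := B.prop
    rw [Matrix.det_fin_two] at h
    exact h
  have hdet0 : ((a₀ * d₀ - b₀ * c₀ - 1 : ℤ) : ZMod l) = 0 := by
    push_cast
    rw [cast_back, cast_back, cast_back, cast_back, hdetM]
    ring
  obtain ⟨e, he⟩ := (ZMod.intCast_zmod_eq_zero_iff_dvd _ l).mp hdet0
  have hcond : ∀ p : ℕ, p.Prime → (p : ℤ) ∣ l → (p : ℤ) ∣ c₀ → (p : ℤ) ∣ d₀ → False := by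
    intro p pp hpl hpc hpd
    have h1 : (p : ℤ) ∣ a₀ * d₀ - b₀ * c₀ - 1 := he ▸ hpl.mul_right e
    have h2 : (p : ℤ) ∣ a₀ * d₀ - b₀ * c₀ := dvd_sub (hpd.mul_left a₀) (hpc.mul_left b₀)
    have h3 : (p : ℤ) ∣ 1 := by
      have := dvd_sub h2 h1
      simpa using this
    have := Int.le_of_dvd one_pos h3
    exact_mod_cast absurd (by exact_mod_cast this : p ≤ 1) pp.one_lt.not_ge
  obtain ⟨t, ht⟩ := exists_coprime_aux q hq l c₀ d₀ hcond
  set c' : ℤ := c₀ + l * t with hc'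
  have hf : a₀ * d₀ - b₀ * c' - 1 = l * (e - b₀ * t) := by
    linear_combination he
  obtain ⟨α, β, γ, habg⟩ := bezout3 ht
  set f : ℤ := e - b₀ * t with hfdef
  set a' : ℤ := a₀ + l * (-(f * β)) with ha'
  set b' : ℤ := b₀ + l * (f * α) with hb'
  have hdet' : a' * d₀ - b' * c' = 1 + (q : ℤ) * (l * (f * γ)) := by
    linear_combination d₀ * ha' - c' * hb' + hf - (l : ℤ) * f * habg
  set T : Matrix (Fin 2) (Fin 2) ℤ := !![a', b'; c', d₀] with hT
  set N : Matrix (Fin 2) (Fin 2) (ZMod q) := Matrix.of fun i j => ((T i j : ℤ) : ZMod q)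
    with hNdef
  have hNmap : N = T.map (Int.cast : ℤ → ZMod q) := by
    ext i j; rfl
  have hNdet : N.det = 1 := by
    have hstep : N.det = ((a' * d₀ - b' * c' : ℤ) : ZMod q) := by
      rw [Matrix.det_fin_two]
      simp only [hNdef, Matrix.of_apply, hT, Matrix.cons_val', Matrix.cons_val_zero,
        Matrix.cons_val_one, Matrix.head_cons, Matrix.head_fin_const, Matrix.empty_val',
        Matrix.cons_val_fin_one]
      push_cast
      ring
    rw [hstep, hdet']
    push_cast
    rw [ZMod.natCast_self]
    ring
  have cast_int : ∀ n : ℤ, (ZMod.cast ((n : ZMod q)) : ZMod l) = (n : ZMod l) := by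
    intro n
    have hcast := map_intCast (ZMod.castHom hl (ZMod l)) n
    rwa [ZMod.castHom_apply] at hcast
  have e00 : ((a' : ℤ) : ZMod l) = M 0 0 := by
    rw [ha', ha₀]
    push_cast
    rw [ZMod.natCast_self, ZMod.natCast_val, ZMod.cast_id]
    ring
  have e01 : ((b' : ℤ) : ZMod l) = M 0 1 := by
    rw [hb', hb₀]
    push_cast
    rw [ZMod.natCast_self, ZMod.natCast_val, ZMod.cast_id]
    ring
  have e10 : ((c' : ℤ) : ZMod l) = M 1 0 := by
    rw [hc', hc₀]
    push_cast
    rw [ZMod.natCast_self, ZMod.natCast_val, ZMod.cast_id]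
    ring
  have e11 : ((d₀ : ℤ) : ZMod l) = M 1 1 := by
    rw [hd₀]; exact cast_back _
  have hTM : ∀ i j, ((T i j : ℤ) : ZMod l) = M i j := by
    simp only [Fin.forall_fin_two]
    refine ⟨⟨?_, ?_⟩, ?_, ?_⟩ <;>
      simp only [hT, Matrix.cons_val', Matrix.cons_val_zero, Matrix.cons_val_one,
        Matrix.head_cons, Matrix.head_fin_const, Matrix.empty_val',
        Matrix.cons_val_fin_one, Matrix.of_apply]
    · exact e00
    · exact e01
    · exact e10
    · exact e11
  refine ⟨(⟨N, hNdet⟩ : SL2 q), ?_⟩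
  apply Subtype.ext
  ext i j
  refine (pi_coe hl _ i j).trans ?_
  show (ZMod.cast (N i j) : ZMod l) = M i j
  rw [hNdef, Matrix.of_apply, cast_int, hTM]

/-- Strong-approximation style decomposition: `K_d = K_{q₁}·K_{q₂}`. -/
lemma decomp {q₁ q₂ : ℕ} (h₁ : q₁ ∣ q) (h₂ : q₂ ∣ q) (hd : Nat.gcd q₁ q₂ ∣ q) (x : SL2 q)
    (hx : pi q (Nat.gcd q₁ q₂) hd x = 1) :
    ∃ a b : SL2 q, pi q q₁ h₁ a = 1 ∧ pi q q₂ h₂ b = 1 ∧ x = a * b := by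
  have hq : q ≠ 0 := NeZero.ne q
  set D := Nat.gcd q₁ q₂ with hDdef
  set L := Nat.lcm q₁ q₂ with hLdef
  have hlq : L ∣ q := Nat.lcm_dvd h₁ h₂
  have h1L : q₁ ∣ L := Nat.dvd_lcm_left q₁ q₂
  have h2L : q₂ ∣ L := Nat.dvd_lcm_right q₁ q₂
  set X : Matrix (Fin 2) (Fin 2) ℤ :=
    Matrix.of fun i j => (((x : Matrix (Fin 2) (Fin 2) (ZMod q)) i j).val : ℤ) with hX
  set E : Matrix (Fin 2) (Fin 2) ℤ := 1 with hE
  have hEval : ∀ i j : Fin 2, E i j = if i = j then 1 else 0 := fun i j => Matrix.one_apply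
  have hXq : ∀ i j, ((X i j : ℤ) : ZMod q) = (x : Matrix (Fin 2) (Fin 2) (ZMod q)) i j := by
    intro i j
    rw [hX, Matrix.of_apply, Int.cast_natCast, ZMod.natCast_val, ZMod.cast_id]
  have hXD : ∀ i j, ((X i j : ℤ) : ZMod D) = ((E i j : ℤ) : ZMod D) := by
    intro i j
    have hent := congrArg (fun z : SL2 D => (z : Matrix (Fin 2) (Fin 2) (ZMod D)) i j) hx
    simp only [pi_coe] at hent
    rw [hX, Matrix.of_apply, Int.cast_natCast, ZMod.natCast_val]
    rw [hent]
    simp [hEval i j, Matrix.one_apply, apply_ite (Int.cast : ℤ → ZMod D)]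
  have hdvd : ∀ i j, ∃ kk : ℤ, X i j - E i j = (D : ℤ) * kk := by
    intro i j
    have : ((X i j - E i j : ℤ) : ZMod D) = 0 := by
      push_cast
      rw [hXD i j]
      ring
    exact (ZMod.intCast_zmod_eq_zero_iff_dvd _ D).mp this
  choose k hk using hdvd
  have hbez : ((D : ℕ) : ℤ) = (q₁ : ℤ) * Nat.gcdA q₁ q₂ + (q₂ : ℤ) * Nat.gcdB q₁ q₂ :=
    Nat.gcd_eq_gcd_ab q₁ q₂
  set A := Nat.gcdA q₁ q₂ with hA
  set Bz := Nat.gcdB q₁ q₂ with hBz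
  set T : Matrix (Fin 2) (Fin 2) ℤ :=
    Matrix.of fun i j => E i j + ((q₁ : ℤ) * A) * k i j with hT
  have hTE : ∀ i j, T i j - E i j = (q₁ : ℤ) * (A * k i j) := by
    intro i j; rw [hT, Matrix.of_apply]; ring
  have hTX : ∀ i j, T i j - X i j = (q₂ : ℤ) * (-Bz * k i j) := by
    intro i j
    rw [hT, Matrix.of_apply]
    linear_combination (-1 : ℤ) * hk i j - k i j * hbez
  have hT1 : ∀ i j, ((T i j : ℤ) : ZMod q₁) = ((E i j : ℤ) : ZMod q₁) := by
    intro i j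
    have : ((T i j - E i j : ℤ) : ZMod q₁) = 0 := by
      rw [hTE i j]; push_cast; rw [ZMod.natCast_self]; ring
    rw [Int.cast_sub] at this
    exact sub_eq_zero.mp this
  have hT2 : ∀ i j, ((T i j : ℤ) : ZMod q₂) = ((X i j : ℤ) : ZMod q₂) := by
    intro i j
    have : ((T i j - X i j : ℤ) : ZMod q₂) = 0 := by
      rw [hTX i j]; push_cast; rw [ZMod.natCast_self]; ring
    rw [Int.cast_sub] at this
    exact sub_eq_zero.mp this
  have hdX : ((X.det : ℤ) : ZMod q) = 1 := by
    rw [Matrix.det_fin_two]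
    push_cast
    rw [hXq 0 0, hXq 0 1, hXq 1 0, hXq 1 1]
    have hx1 := x.prop
    rw [Matrix.det_fin_two] at hx1
    exact hx1
  have d1 : (q₁ : ℤ) ∣ T.det - 1 := by
    apply (ZMod.intCast_zmod_eq_zero_iff_dvd _ q₁).mp
    rw [Matrix.det_fin_two]
    push_cast
    rw [hT1 0 0, hT1 0 1, hT1 1 0, hT1 1 1]
    simp [hEval, Matrix.one_apply]
  have d2 : (q₂ : ℤ) ∣ T.det - 1 := by
    have e1 : (q₂ : ℤ) ∣ T.det - X.det := by
      apply (ZMod.intCast_zmod_eq_zero_iff_dvd _ q₂).mp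
      rw [Matrix.det_fin_two, Matrix.det_fin_two]
      push_cast
      rw [hT2 0 0, hT2 0 1, hT2 1 0, hT2 1 1]
      ring
    have e2 : (q₂ : ℤ) ∣ X.det - 1 := by
      have eq : (q : ℤ) ∣ X.det - 1 := by
        apply (ZMod.intCast_zmod_eq_zero_iff_dvd _ q).mp
        rw [Int.cast_sub, hdX, Int.cast_one]
        ring
      exact dvd_trans (Int.natCast_dvd_natCast.mpr h₂) eq
    have := dvd_add e1 e2
    simpa using this
  have hlcm : ((L : ℕ) : ℤ) ∣ T.det - 1 := by
    have hIl := Int.dvd_natAbs.mp (Int.natCast_dvd_natCast.mpr (Int.lcm_dvd (Int.dvd_natAbs.mpr d1) (Int.dvd_natAbs.mpr d2)))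
    have : Int.lcm (q₁ : ℤ) (q₂ : ℤ) = L := by
      simp [Int.lcm, hLdef]
    rwa [this] at hIl
  have hwdet : (Matrix.of fun i j => ((T i j : ℤ) : ZMod L)).det = 1 := by
    have hstep : (Matrix.of fun i j => ((T i j : ℤ) : ZMod L)).det = ((T.det : ℤ) : ZMod L) := by
      rw [Matrix.det_fin_two, Matrix.det_fin_two]
      simp only [Matrix.of_apply]
      push_cast
      ring
    rw [hstep]
    obtain ⟨c, hc⟩ := hlcm
    have : (T.det : ℤ) = 1 + (L : ℤ) * c := by linarith
    rw [this]
    push_cast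
    rw [ZMod.natCast_self]
    ring
  obtain ⟨y, hy⟩ := sl2_lift hlq (⟨_, hwdet⟩ : SL2 L)
  have hyent : ∀ i j, (ZMod.cast ((y : Matrix (Fin 2) (Fin 2) (ZMod q)) i j) : ZMod L)
      = ((T i j : ℤ) : ZMod L) := by
    intro i j
    have hent := congrArg (fun z : SL2 L => (z : Matrix (Fin 2) (Fin 2) (ZMod L)) i j) hy
    simp only [pi_coe hlq] at hent
    rw [hent, Matrix.of_apply]
  have hcast_tower : ∀ (m : ℕ) (hmL : m ∣ L) (u : ZMod q),
      (ZMod.cast u : ZMod m) = (ZMod.cast ((ZMod.cast u : ZMod L)) : ZMod m) := by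
    intro m hmL u
    have hcomp := RingHom.congr_fun (ZMod.castHom_comp hmL hlq) u
    simp only [RingHom.comp_apply, ZMod.castHom_apply] at hcomp
    exact hcomp.symm
  have hcast_int : ∀ (m : ℕ) (hmL : m ∣ L) (n : ℤ),
      (ZMod.cast ((n : ZMod L)) : ZMod m) = (n : ZMod m) := by
    intro m hmL n
    have hcast := map_intCast (ZMod.castHom hmL (ZMod m)) n
    rwa [ZMod.castHom_apply] at hcast
  have hy1 : pi q q₁ h₁ y = 1 := by
    apply Subtype.ext
    ext i j
    rw [pi_coe h₁]
    rw [hcast_tower q₁ h1L, hyent i j, hcast_int q₁ h1L, hT1 i j]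
    simp [hEval i j, Matrix.one_apply, apply_ite (Int.cast : ℤ → ZMod q₁)]
  have hy2 : pi q q₂ h₂ y = pi q q₂ h₂ x := by
    apply Subtype.ext
    ext i j
    rw [pi_coe h₂, pi_coe h₂]
    rw [hcast_tower q₂ h2L, hyent i j, hcast_int q₂ h2L, hT2 i j]
    have hback := map_intCast (ZMod.castHom h₂ (ZMod q₂)) (X i j)
    rw [ZMod.castHom_apply] at hback
    rw [← hback, hXq i j]
  refine ⟨y, y⁻¹ * x, hy1, ?_, by group⟩
  rw [_root_.map_mul, map_inv, hy2]
  simp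

/-- Normalized indicator of `K_Q`. -/
noncomputable def uu (q : ℕ) [NeZero q] (Q : ℕ) : SL2 q → ℂ :=
  fun x => if redEq q Q 1 x then (((KQ q Q).card : ℂ))⁻¹ else 0

lemma uu_eq {Q : ℕ} (hQ : Q ∣ q) (x : SL2 q) :
    uu q Q x = if pi q Q hQ x = 1 then (((KQ q Q).card : ℂ))⁻¹ else 0 := by
  have : redEq q Q 1 x ↔ pi q Q hQ x = 1 := by
    rw [redEq_iff hQ]
    rw [_root_.map_one]
    exact eq_comm
  simp [uu, this]

lemma card_KQ_ne (Q : ℕ) : (((KQ q Q).card : ℂ)) ≠ 0 := by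
  have h1 : (1 : SL2 q) ∈ KQ q Q := by
    simp [KQ, cclass, redEq_refl]
  have : 0 < (KQ q Q).card := Finset.card_pos.mpr ⟨1, h1⟩
  exact_mod_cast this.ne'

lemma sum_uu (Q : ℕ) : ∑ x, uu q Q x = 1 := by
  have h : ∑ x, uu q Q x = ∑ x ∈ KQ q Q, (((KQ q Q).card : ℂ))⁻¹ := by
    rw [KQ, cclass, Finset.sum_filter]
    exact Finset.sum_congr rfl fun x _ => by simp [uu, KQ, cclass]
  rw [h, Finset.sum_const, nsmul_eq_mul, mul_inv_cancel₀ (card_KQ_ne Q)]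

lemma muQ_eq_conv {Q : ℕ} (hQ : Q ∣ q) (μ : SL2 q → ℂ) :
    muQ q Q μ = conv q μ (uu q Q) := by
  funext x
  have key : ∀ y : SL2 q, redEq q Q 1 (y⁻¹ * x) ↔ redEq q Q x y := by
    intro y
    rw [redEq_iff hQ, redEq_iff hQ, _root_.map_one, _root_.map_mul, map_inv, eq_comm,
      inv_mul_eq_one, eq_comm]
  have : conv q μ (uu q Q) x
      = ∑ y, if redEq q Q x y then μ y * (((KQ q Q).card : ℂ))⁻¹ else 0 := by
    unfold conv uu
    refine Finset.sum_congr rfl fun y _ => ?_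
    simp only [key y, mul_ite, mul_zero]
  rw [this, ← Finset.sum_filter]
  rw [muQ, ← Finset.sum_mul]
  rw [cclass, one_div, mul_comm]

lemma conv_uu_left {Q : ℕ} (hQ : Q ∣ q) (μ : SL2 q → ℂ) :
    conv q (uu q Q) μ = muQ q Q μ := by
  funext x
  have : conv q (uu q Q) μ x
      = ∑ y, if redEq q Q 1 y then (((KQ q Q).card : ℂ))⁻¹ * μ (y⁻¹ * x) else 0 := by
    unfold conv uu
    refine Finset.sum_congr rfl fun y _ => ?_
    simp only [ite_mul, zero_mul]
  rw [this, ← Finset.sum_filter]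
  have hb : ∑ y ∈ Finset.univ.filter (fun y => redEq q Q 1 y),
      (((KQ q Q).card : ℂ))⁻¹ * μ (y⁻¹ * x)
      = ∑ z ∈ cclass q Q x, (((KQ q Q).card : ℂ))⁻¹ * μ z := by
    refine Finset.sum_nbij' (fun y => y⁻¹ * x) (fun z => x * z⁻¹) ?_ ?_ ?_ ?_ ?_
    · intro y hy
      simp only [Finset.mem_filter, Finset.mem_univ, true_and] at hy ⊢
      rw [cclass, Finset.mem_filter]
      refine ⟨Finset.mem_univ _, ?_⟩
      rw [redEq_iff hQ] at hy ⊢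
      rw [_root_.map_mul, map_inv, ← hy, _root_.map_one, inv_one, one_mul]
    · intro z hz
      rw [cclass, Finset.mem_filter] at hz
      simp only [Finset.mem_filter, Finset.mem_univ, true_and]
      rw [redEq_iff hQ] at hz ⊢
      rw [_root_.map_one, _root_.map_mul, map_inv, hz.2]
      simp
    · intro y _; group
    · intro z _; group
    · intro y _; rfl
  rw [hb, ← Finset.mul_sum, muQ, one_div]

lemma conv_assoc (f g h : SL2 q → ℂ) :
    conv q (conv q f g) h = conv q f (conv q g h) := by
  funext x
  unfold conv
  simp only [Finset.sum_mul, Finset.mul_sum]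
  rw [Finset.sum_comm]
  refine Finset.sum_congr rfl fun z _ => ?_
  refine Fintype.sum_equiv (Equiv.mulLeft z⁻¹) _ _ fun y => ?_
  simp only [Equiv.coe_mulLeft]
  rw [show (z⁻¹ * y)⁻¹ * (z⁻¹ * x) = y⁻¹ * x by group]
  ring

lemma sum_conv (f g : SL2 q → ℂ) :
    ∑ x, conv q f g x = (∑ x, f x) * (∑ x, g x) := by
  unfold conv
  rw [Finset.sum_comm, Finset.sum_mul]
  refine Finset.sum_congr rfl fun y _ => ?_
  rw [← Finset.mul_sum]
  congr 1
  exact Fintype.sum_equiv (Equiv.mulLeft y⁻¹) _ _ fun z => rfl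

lemma conv_uu_uu {Q₁ Q₂ : ℕ} (h₁ : Q₁ ∣ q) (h₂ : Q₂ ∣ q) :
    conv q (uu q Q₁) (uu q Q₂) = uu q (Nat.gcd Q₁ Q₂) := by
  set D := Nat.gcd Q₁ Q₂ with hDdef
  have hdq : D ∣ q := (Nat.gcd_dvd_left Q₁ Q₂).trans h₁
  have hd1 : D ∣ Q₁ := Nat.gcd_dvd_left _ _
  have hd2 : D ∣ Q₂ := Nat.gcd_dvd_right _ _
  set S := conv q (uu q Q₁) (uu q Q₂) with hS
  have down1 : ∀ z : SL2 q, pi q Q₁ h₁ z = 1 → pi q D hdq z = 1 := by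
    intro z hz
    have h' := pi_trans hd1 h₁ z
    rw [hz, _root_.map_one] at h'
    exact h'
  have down2 : ∀ z : SL2 q, pi q Q₂ h₂ z = 1 → pi q D hdq z = 1 := by
    intro z hz
    have h' := pi_trans hd2 h₂ z
    rw [hz, _root_.map_one] at h'
    exact h'
  have zero_off : ∀ x : SL2 q, pi q D hdq x ≠ 1 → S x = 0 := by
    intro x hx
    apply Finset.sum_eq_zero
    intro y _
    rcases eq_or_ne (pi q Q₁ h₁ y) 1 with h | h
    · rcases eq_or_ne (pi q Q₂ h₂ (y⁻¹ * x)) 1 with h' | h'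
      · exfalso
        apply hx
        have d1 := down1 y h
        have d2 := down2 (y⁻¹ * x) h'
        have hxy : x = y * (y⁻¹ * x) := by group
        rw [hxy, _root_.map_mul, d1, d2, one_mul]
      · rw [uu_eq h₂, if_neg h', mul_zero]
    · rw [uu_eq h₁, if_neg h, zero_mul]
  have inv2 : ∀ x b : SL2 q, pi q Q₂ h₂ b = 1 → S (x * b) = S x := by
    intro x b hb
    show (∑ y, uu q Q₁ y * uu q Q₂ (y⁻¹ * (x * b)))
        = ∑ y, uu q Q₁ y * uu q Q₂ (y⁻¹ * x)
    refine Finset.sum_congr rfl fun y _ => ?_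
    congr 1
    rw [uu_eq h₂, uu_eq h₂]
    have : pi q Q₂ h₂ (y⁻¹ * (x * b)) = pi q Q₂ h₂ (y⁻¹ * x) := by
      rw [show y⁻¹ * (x * b) = (y⁻¹ * x) * b by group, _root_.map_mul, hb, mul_one]
    rw [this]
  have inv1 : ∀ x a : SL2 q, pi q Q₁ h₁ a = 1 → S (x * a) = S x := by
    intro x a ha
    show (∑ y, uu q Q₁ y * uu q Q₂ (y⁻¹ * (x * a)))
        = ∑ y, uu q Q₁ y * uu q Q₂ (y⁻¹ * x)
    refine (Fintype.sum_equiv (Equiv.mulLeft (x * a * x⁻¹)) _ _ fun z => ?_).symm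
    simp only [Equiv.coe_mulLeft]
    have e1 : uu q Q₁ (x * a * x⁻¹ * z) = uu q Q₁ z := by
      rw [uu_eq h₁, uu_eq h₁]
      have : pi q Q₁ h₁ (x * a * x⁻¹ * z) = pi q Q₁ h₁ z := by
        simp only [_root_.map_mul, map_inv, ha, mul_one]
        group
      rw [this]
    have e2 : (x * a * x⁻¹ * z)⁻¹ * (x * a) = z⁻¹ * x := by group
    rw [e1, e2]
  have const_on : ∀ x : SL2 q, pi q D hdq x = 1 → S x = S 1 := by
    intro x hx
    obtain ⟨a, b, ha, hb, rfl⟩ := decomp h₁ h₂ hdq x hx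
    rw [inv2 a b hb]
    have h' := inv1 1 a ha
    rw [one_mul] at h'
    exact h'
  have hSform : ∀ x, S x = if pi q D hdq x = 1 then S 1 else 0 := by
    intro x
    by_cases h : pi q D hdq x = 1
    · rw [if_pos h]; exact const_on x h
    · rw [if_neg h]; exact zero_off x h
  have hUform : ∀ x, uu q D x = if pi q D hdq x = 1 then uu q D 1 else 0 := by
    intro x
    rw [uu_eq hdq x, uu_eq hdq 1, _root_.map_one, if_pos rfl]
  have hsum_S : ∑ x, S x = 1 := by
    rw [hS, sum_conv, sum_uu, sum_uu, one_mul]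
  have hsum_U : ∑ x, uu q D x = 1 := sum_uu D
  set N := (Finset.univ.filter (fun x : SL2 q => pi q D hdq x = 1)).card with hN
  have hform_sum : ∀ F : SL2 q → ℂ, (∀ x, F x = if pi q D hdq x = 1 then F 1 else 0) →
      ∑ x, F x = (N : ℂ) * F 1 := by
    intro F hF
    calc ∑ x, F x = ∑ x, if pi q D hdq x = 1 then F 1 else 0 :=
          Finset.sum_congr rfl fun x _ => hF x
    _ = ∑ x ∈ Finset.univ.filter (fun x : SL2 q => pi q D hdq x = 1), F 1 :=
          (Finset.sum_filter _ _).symm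
    _ = (N : ℂ) * F 1 := by rw [Finset.sum_const, nsmul_eq_mul]
  have hNne : (N : ℂ) ≠ 0 := by
    have : (1 : SL2 q) ∈ Finset.univ.filter (fun x : SL2 q => pi q D hdq x = 1) := by
      simp
    have hpos : 0 < N := Finset.card_pos.mpr ⟨1, this⟩
    exact_mod_cast hpos.ne'
  have hkey : S 1 = uu q D 1 := by
    have e1 : (N : ℂ) * S 1 = 1 := by rw [← hform_sum S hSform]; exact hsum_S
    have e2 : (N : ℂ) * uu q D 1 = 1 := by rw [← hform_sum (uu q D) hUform]; exact hsum_U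
    have := e1.trans e2.symm
    exact mul_left_cancel₀ hNne this
  funext x
  rw [hSform x, hUform x, hkey]

end MuAux

/-- **Convolution identity:** for divisors `q₁, q₂` of `q`,
`μ_{q₁} ∗ μ_{q₂} = μ_d ∗ μ_d` where `d = gcd(q₁, q₂)`. -/
theorem muQ_conv_muQ (q : ℕ) [NeZero q] (μ : SL2 q → ℂ) (q₁ q₂ : ℕ)
    (h₁ : q₁ ∣ q) (h₂ : q₂ ∣ q) :
    conv q (muQ q q₁ μ) (muQ q q₂ μ) =
      conv q (muQ q (Nat.gcd q₁ q₂) μ) (muQ q (Nat.gcd q₁ q₂) μ) := by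
  classical
  have key : ∀ (Qa Qb : ℕ) (_ : Qa ∣ q) (_ : Qb ∣ q),
      conv q (muQ q Qa μ) (muQ q Qb μ)
        = conv q μ (conv q (MuAux.uu q (Nat.gcd Qa Qb)) μ) := by
    intro Qa Qb ha hb
    nth_rewrite 1 [MuAux.muQ_eq_conv ha μ]
    rw [← MuAux.conv_uu_left hb μ, MuAux.conv_assoc,
      ← MuAux.conv_assoc (MuAux.uu q Qa), MuAux.conv_uu_uu ha hb]
  have hd : Nat.gcd q₁ q₂ ∣ q := (Nat.gcd_dvd_left q₁ q₂).trans h₁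
  rw [key q₁ q₂ h₁ h₂, key (Nat.gcd q₁ q₂) (Nat.gcd q₁ q₂) hd hd, Nat.gcd_self]
end

section
/- Let q be a positive integer and Q a divisor of q. Write q = q₁q₂ where q₁ = ∏_{p | Q} p^{v_p(q)} and q₂ = q/q₁ (so q₁, q₂ are coprime and q₁ has the same prime divisors as Q). Let a, b ∈ ℤ/qℤ, and let s̄ ∈ SL₂(ℤ/Qℤ) satisfy: s̄₂₁ā + s̄₂₂ is a unit in ℤ/Qℤ and s̄₁₁ā + s̄₁₂ = b̄(s̄₂₁ā + s̄₂₂), where ā, b̄ are the reductions of a, b mod Q. Then #{s ∈ SL₂(ℤ/qℤ) : s ≡ s̄ (mod Q), s₂₁a + s₂₂ is a unit in ℤ/qℤ, and s₁₁a + s₁₂ = b(s₂₁a + s₂₂)} = (q₁/Q)² · q₂ · φ(q₂) = (q/Q)² · φ(q₂)/q₂, where φ is Euler's totient function. -/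
open scoped Classical

open Finset

private lemma fiber_card_mul {G H : Type*} [Group G] [Group H] [Fintype G] [Fintype H]
    [DecidableEq H] (f : G →* H) (hf : Function.Surjective f) (y : H) :
    (univ.filter fun x => f x = y).card * Fintype.card H = Fintype.card G := by
  have key : ∀ z : H, (univ.filter fun x => f x = z).card
      = (univ.filter fun x => f x = y).card := by
    intro z
    obtain ⟨g, hg⟩ := hf (y * z⁻¹)
    refine card_bij' (fun x _ => g * x) (fun x _ => g⁻¹ * x) ?_ ?_ ?_ ?_
    · intro x hx
      simp only [mem_filter, mem_univ, true_and] at hx ⊢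
      rw [map_mul, hg, hx]
      group
    · intro x hx
      simp only [mem_filter, mem_univ, true_and] at hx ⊢
      rw [map_mul, map_inv, hg, hx]
      group
    · intro x _; group
    · intro x _; group
  have h2 : (univ : Finset G).card = ∑ z ∈ (univ : Finset H),
      (univ.filter fun x => f x = z).card :=
    card_eq_sum_card_fiberwise fun x _ => mem_univ (f x)
  simp only [key, sum_const, smul_eq_mul, card_univ] at h2
  rw [h2]; exact mul_comm _ _

private lemma fiber_card_add {G H : Type*} [AddGroup G] [AddGroup H] [Fintype G] [Fintype H]
    [DecidableEq H] (f : G → H) (hadd : ∀ x y, f (x + y) = f x + f y)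
    (hf : Function.Surjective f) (y : H) :
    (univ.filter fun x => f x = y).card * Fintype.card H = Fintype.card G := by
  set F : G →+ H := AddMonoidHom.mk' f hadd with hF
  have key : ∀ z : H, (univ.filter fun x => f x = z).card
      = (univ.filter fun x => f x = y).card := by
    intro z
    obtain ⟨g, hg⟩ := hf (y - z)
    refine card_bij' (fun x _ => g + x) (fun x _ => -g + x) ?_ ?_ ?_ ?_
    · intro x hx
      simp only [mem_filter, mem_univ, true_and] at hx ⊢
      rw [hadd, hg, hx]
      simp
    · intro x hx
      simp only [mem_filter, mem_univ, true_and] at hx ⊢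
      have : f (-g) = -(y - z) := by
        have := F.map_neg g
        simpa [hF, hg] using this
      rw [hadd, this, hx]
      simp
    · intro x _; simp
    · intro x _; simp
  have h2 : (univ : Finset G).card = ∑ z ∈ (univ : Finset H),
      (univ.filter fun x => f x = z).card :=
    card_eq_sum_card_fiberwise fun x _ => mem_univ (f x)
  simp only [key, sum_const, smul_eq_mul, card_univ] at h2
  rw [h2]; exact mul_comm _ _

private def psi {n : ℕ} (a b : ZMod n) (u : (ZMod n)ˣ) (t : ZMod n) : SL2 n :=
  ⟨!![(↑u⁻¹ : ZMod n) + b * t, b * ↑u - a * ((↑u⁻¹ : ZMod n) + b * t); t, ↑u - t * a], by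
    rw [Matrix.det_fin_two_of]
    linear_combination (Units.inv_mul u)⟩

private lemma psi_00 {n : ℕ} (a b : ZMod n) (u : (ZMod n)ˣ) (t : ZMod n) :
    (psi a b u t : Matrix (Fin 2) (Fin 2) (ZMod n)) 0 0 = (↑u⁻¹ : ZMod n) + b * t := rfl
private lemma psi_01 {n : ℕ} (a b : ZMod n) (u : (ZMod n)ˣ) (t : ZMod n) :
    (psi a b u t : Matrix (Fin 2) (Fin 2) (ZMod n)) 0 1
      = b * ↑u - a * ((↑u⁻¹ : ZMod n) + b * t) := rfl
private lemma psi_10 {n : ℕ} (a b : ZMod n) (u : (ZMod n)ˣ) (t : ZMod n) :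
    (psi a b u t : Matrix (Fin 2) (Fin 2) (ZMod n)) 1 0 = t := rfl
private lemma psi_11 {n : ℕ} (a b : ZMod n) (u : (ZMod n)ˣ) (t : ZMod n) :
    (psi a b u t : Matrix (Fin 2) (Fin 2) (ZMod n)) 1 1 = ↑u - t * a := rfl

private lemma sl2_entries {n : ℕ} (a b : ZMod n) (s : SL2 n) (u : (ZMod n)ˣ)
    (hspec : (↑u : ZMod n) = (s : Matrix (Fin 2) (Fin 2) (ZMod n)) 1 0 * a
      + (s : Matrix (Fin 2) (Fin 2) (ZMod n)) 1 1)
    (he : (s : Matrix (Fin 2) (Fin 2) (ZMod n)) 0 0 * a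
        + (s : Matrix (Fin 2) (Fin 2) (ZMod n)) 0 1
      = b * ((s : Matrix (Fin 2) (Fin 2) (ZMod n)) 1 0 * a
        + (s : Matrix (Fin 2) (Fin 2) (ZMod n)) 1 1)) :
    (s : Matrix (Fin 2) (Fin 2) (ZMod n)) 0 0
        = (↑u⁻¹ : ZMod n) + b * (s : Matrix (Fin 2) (Fin 2) (ZMod n)) 1 0 ∧
      (s : Matrix (Fin 2) (Fin 2) (ZMod n)) 0 1
        = b * ↑u - a * ((↑u⁻¹ : ZMod n)
            + b * (s : Matrix (Fin 2) (Fin 2) (ZMod n)) 1 0) ∧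
      (s : Matrix (Fin 2) (Fin 2) (ZMod n)) 1 1
        = ↑u - (s : Matrix (Fin 2) (Fin 2) (ZMod n)) 1 0 * a := by
  have hdet : (s : Matrix (Fin 2) (Fin 2) (ZMod n)) 0 0
        * (s : Matrix (Fin 2) (Fin 2) (ZMod n)) 1 1
      - (s : Matrix (Fin 2) (Fin 2) (ZMod n)) 0 1
        * (s : Matrix (Fin 2) (Fin 2) (ZMod n)) 1 0 = 1 := by
    have h := s.prop
    rwa [Matrix.det_fin_two] at h
  have hinv : (↑u⁻¹ : ZMod n) * ((s : Matrix (Fin 2) (Fin 2) (ZMod n)) 1 0 * a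
      + (s : Matrix (Fin 2) (Fin 2) (ZMod n)) 1 1) = 1 := by
    rw [← hspec]; exact u.inv_mul
  have h00 : (s : Matrix (Fin 2) (Fin 2) (ZMod n)) 0 0
      = (↑u⁻¹ : ZMod n) + b * (s : Matrix (Fin 2) (Fin 2) (ZMod n)) 1 0 := by
    have hc : (s : Matrix (Fin 2) (Fin 2) (ZMod n)) 0 0
          * ((s : Matrix (Fin 2) (Fin 2) (ZMod n)) 1 0 * a
            + (s : Matrix (Fin 2) (Fin 2) (ZMod n)) 1 1)
        = ((↑u⁻¹ : ZMod n) + b * (s : Matrix (Fin 2) (Fin 2) (ZMod n)) 1 0)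
          * ((s : Matrix (Fin 2) (Fin 2) (ZMod n)) 1 0 * a
            + (s : Matrix (Fin 2) (Fin 2) (ZMod n)) 1 1) := by
      linear_combination hdet + (s : Matrix (Fin 2) (Fin 2) (ZMod n)) 1 0 * he - hinv
    exact IsUnit.mul_right_cancel ⟨u, hspec⟩ hc
  refine ⟨h00, ?_, ?_⟩
  · have h01 : (s : Matrix (Fin 2) (Fin 2) (ZMod n)) 0 1
        = b * ↑u - a * (s : Matrix (Fin 2) (Fin 2) (ZMod n)) 0 0 := by
      rw [hspec]; linear_combination he
    rw [h01, h00]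
  · rw [hspec]; ring

/-- **Hensel lifting count.** Let `Q ∣ q`, write `q = q₁q₂` with
`q₁ = ∏_{p | Q} p^{v_p(q)}` and `q₂ = q/q₁`. If `s̄ ∈ SL₂(ℤ/Qℤ)` sends `ā` to `b̄`
under the fractional linear action (with `s̄₂₁ā + s̄₂₂` a unit), then the number of
`s ∈ SL₂(ℤ/qℤ)` with `s ≡ s̄ (mod Q)` sending `a` to `b` under the fractional linear
action equals `(q₁/Q)²·q₂·φ(q₂) = (q/Q)²·φ(q₂)/q₂`. -/
theorem hensel_lifting_count (q : ℕ) [NeZero q] (hq : 0 < q) (Q : ℕ) (hQ : Q ∣ q)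
    (q₁ q₂ : ℕ)
    (hq₁ : q₁ = ∏ p ∈ Q.primeFactors, p ^ (q.factorization p))
    (hq₂ : q₂ = q / q₁)
    (a b : ZMod q) (sbar : SL2 Q)
    (hunit : IsUnit ((sbar : Matrix (Fin 2) (Fin 2) (ZMod Q)) 1 0 * (ZMod.cast a : ZMod Q)
      + (sbar : Matrix (Fin 2) (Fin 2) (ZMod Q)) 1 1))
    (heq : (sbar : Matrix (Fin 2) (Fin 2) (ZMod Q)) 0 0 * (ZMod.cast a : ZMod Q)
        + (sbar : Matrix (Fin 2) (Fin 2) (ZMod Q)) 0 1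
      = (ZMod.cast b : ZMod Q) *
        ((sbar : Matrix (Fin 2) (Fin 2) (ZMod Q)) 1 0 * (ZMod.cast a : ZMod Q)
          + (sbar : Matrix (Fin 2) (Fin 2) (ZMod Q)) 1 1)) :
    ((Finset.univ.filter (fun s : SL2 q =>
        (∀ i j, (ZMod.cast ((s : Matrix (Fin 2) (Fin 2) (ZMod q)) i j) : ZMod Q)
          = (sbar : Matrix (Fin 2) (Fin 2) (ZMod Q)) i j) ∧
        IsUnit ((s : Matrix (Fin 2) (Fin 2) (ZMod q)) 1 0 * a
          + (s : Matrix (Fin 2) (Fin 2) (ZMod q)) 1 1) ∧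
        (s : Matrix (Fin 2) (Fin 2) (ZMod q)) 0 0 * a
            + (s : Matrix (Fin 2) (Fin 2) (ZMod q)) 0 1
          = b * ((s : Matrix (Fin 2) (Fin 2) (ZMod q)) 1 0 * a
            + (s : Matrix (Fin 2) (Fin 2) (ZMod q)) 1 1))).card : ℝ)
      = ((q₁ : ℝ) / (Q : ℝ)) ^ 2 * (q₂ : ℝ) * (q₂.totient : ℝ) := by
  -- basic numerics
  have hq0 : q ≠ 0 := hq.ne'
  have hQ0 : Q ≠ 0 := by rintro rfl; exact hq0 (zero_dvd_iff.mp hQ)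
  haveI : NeZero Q := ⟨hQ0⟩
  have hqprod : q = ∏ p ∈ q.primeFactors, p ^ (q.factorization p) := by
    conv_lhs => rw [← Nat.factorization_prod_pow_eq_self hq0]
    rw [← Nat.support_factorization]
    rfl
  have hQprod : Q = ∏ p ∈ Q.primeFactors, p ^ (Q.factorization p) := by
    conv_lhs => rw [← Nat.factorization_prod_pow_eq_self hQ0]
    rw [← Nat.support_factorization]
    rfl
  have h1 : q₁ ∣ q := by
    rw [hq₁]
    conv_rhs => rw [hqprod]
    exact Finset.prod_dvd_prod_of_subset _ _ _ (Nat.primeFactors_mono hQ hq0)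
  have hq₁0 : q₁ ≠ 0 := by
    rintro rfl
    exact hq0 (zero_dvd_iff.mp h1)
  have hQdvdq₁ : Q ∣ q₁ := by
    rw [hq₁]
    conv_lhs => rw [hQprod]
    refine Finset.prod_dvd_prod_of_dvd _ _ fun p hp => pow_dvd_pow p ?_
    exact (Nat.factorization_le_iff_dvd hQ0 hq0).mpr hQ p
  have hq₁pow : q₁ ∣ Q ^ (∑ p ∈ Q.primeFactors, q.factorization p) := by
    rw [hq₁, ← Finset.prod_pow_eq_pow_sum]
    exact Finset.prod_dvd_prod_of_dvd _ _ fun p hp =>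
      pow_dvd_pow_of_dvd (Nat.dvd_of_mem_primeFactors hp) _
  have hqmul : q = q₁ * q₂ := by rw [hq₂, Nat.mul_div_cancel' h1]
  have hpf : q₁.primeFactors = Q.primeFactors := by
    apply Finset.Subset.antisymm
    · intro p hp
      obtain ⟨hp1, hp2, -⟩ := Nat.mem_primeFactors.mp hp
      exact Nat.mem_primeFactors.mpr ⟨hp1, hp1.dvd_of_dvd_pow (hp2.trans hq₁pow), hQ0⟩
    · exact Nat.primeFactors_mono hQdvdq₁ hq₁0
  have hcop : Nat.Coprime q₁ q₂ := by
    by_contra hg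
    have hp : (Nat.gcd q₁ q₂).minFac.Prime := Nat.minFac_prime hg
    set p := (Nat.gcd q₁ q₂).minFac with hpdef
    have hpq₁ : p ∣ q₁ := (Nat.minFac_dvd _).trans (Nat.gcd_dvd_left _ _)
    have hpq₂ : p ∣ q₂ := (Nat.minFac_dvd _).trans (Nat.gcd_dvd_right _ _)
    have hpQ : p ∣ Q := hp.dvd_of_dvd_pow (hpq₁.trans hq₁pow)
    have hpmem : p ∈ Q.primeFactors := Nat.mem_primeFactors.mpr ⟨hp, hpQ, hQ0⟩
    have hdvd1 : p ^ q.factorization p ∣ q₁ := by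
      rw [hq₁]
      exact Finset.dvd_prod_of_mem _ hpmem
    have hdvd : p ^ (q.factorization p + 1) ∣ q₁ * q₂ := by
      rw [pow_succ]
      exact mul_dvd_mul hdvd1 hpq₂
    rw [← hqmul] at hdvd
    have hle := (Nat.Prime.pow_dvd_iff_le_factorization hp hq0).mp hdvd
    omega
  have hratio : q₁.totient * Q = Q.totient * q₁ := by
    have hA := Nat.totient_eq_mul_prod_factors q₁
    have hB := Nat.totient_eq_mul_prod_factors Q
    have : ((q₁.totient * Q : ℕ) : ℚ) = ((Q.totient * q₁ : ℕ) : ℚ) := by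
      push_cast
      rw [hA, hB, hpf]
      ring
    exact_mod_cast this
  have htot : q.totient = q₁.totient * q₂.totient := by
    rw [hqmul, Nat.totient_mul hcop]
  -- the cast ring hom
  have hcast : ∀ x : ZMod q, (ZMod.cast x : ZMod Q) = ZMod.castHom hQ (ZMod Q) x :=
    fun x => (ZMod.castHom_apply x).symm
  obtain ⟨ubar, hubar⟩ := hunit
  have hsbar := sl2_entries (ZMod.cast a) (ZMod.cast b) sbar ubar hubar heq
  -- the parameter set
  set S : Finset ((ZMod q)ˣ × ZMod q) := univ.filter (fun pr : (ZMod q)ˣ × ZMod q =>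
    ZMod.unitsMap hQ pr.1 = ubar ∧
    ZMod.castHom hQ (ZMod Q) pr.2 = (sbar : Matrix (Fin 2) (Fin 2) (ZMod Q)) 1 0)
    with hSdef
  have hcount : (Finset.univ.filter (fun s : SL2 q =>
        (∀ i j, (ZMod.cast ((s : Matrix (Fin 2) (Fin 2) (ZMod q)) i j) : ZMod Q)
          = (sbar : Matrix (Fin 2) (Fin 2) (ZMod Q)) i j) ∧
        IsUnit ((s : Matrix (Fin 2) (Fin 2) (ZMod q)) 1 0 * a
          + (s : Matrix (Fin 2) (Fin 2) (ZMod q)) 1 1) ∧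
        (s : Matrix (Fin 2) (Fin 2) (ZMod q)) 0 0 * a
            + (s : Matrix (Fin 2) (Fin 2) (ZMod q)) 0 1
          = b * ((s : Matrix (Fin 2) (Fin 2) (ZMod q)) 1 0 * a
            + (s : Matrix (Fin 2) (Fin 2) (ZMod q)) 1 1))).card = S.card := by
    refine Finset.card_bij'
      (fun s hs => (((Finset.mem_filter.mp hs).2.2.1).unit,
        (s : Matrix (Fin 2) (Fin 2) (ZMod q)) 1 0))
      (fun pr _ => psi a b pr.1 pr.2) ?_ ?_ ?_ ?_
    · -- i maps into S
      intro s hs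
      obtain ⟨-, hcongr, hu, he⟩ := Finset.mem_filter.mp hs
      rw [hSdef, Finset.mem_filter]
      refine ⟨mem_univ _, ?_, ?_⟩
      · apply Units.ext
        show ZMod.castHom hQ (ZMod Q)
            ((((Finset.mem_filter.mp hs).2.2.1).unit : ZMod q)) = (↑ubar : ZMod Q)
        rw [IsUnit.unit_spec]
        simp only [map_add, map_mul]
        simp only [← hcast]
        rw [hcongr 1 0, hcongr 1 1, ← hubar]
      · rw [← hcast]
        exact hcongr 1 0
    · -- psi maps into the solution set
      intro pr hpr
      rw [hSdef, Finset.mem_filter] at hpr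
      obtain ⟨-, hpr1, hpr2⟩ := hpr
      have hfu : ZMod.castHom hQ (ZMod Q) (↑pr.1 : ZMod q) = (↑ubar : ZMod Q) := by
        rw [← hpr1]; rfl
      have hfui : ZMod.castHom hQ (ZMod Q) (↑pr.1⁻¹ : ZMod q) = (↑ubar⁻¹ : ZMod Q) := by
        rw [← hpr1, ← map_inv]; rfl
      refine Finset.mem_filter.mpr ⟨mem_univ _, ?_, ?_, ?_⟩
      · simp only [Fin.forall_fin_two]
        refine ⟨⟨?_, ?_⟩, ?_, ?_⟩
        · rw [psi_00, hcast]
          simp only [map_add, map_sub, map_mul]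
          rw [hfui, hpr2, ← hcast b]
          exact hsbar.1.symm
        · rw [psi_01, hcast]
          simp only [map_add, map_sub, map_mul]
          rw [hfu, hfui, hpr2, ← hcast a, ← hcast b]
          exact hsbar.2.1.symm
        · rw [psi_10, hcast]
          exact hpr2
        · rw [psi_11, hcast]
          simp only [map_add, map_sub, map_mul]
          rw [hfu, hpr2, ← hcast a]
          exact hsbar.2.2.symm
      · rw [psi_10, psi_11]
        have : pr.2 * a + ((↑pr.1 : ZMod q) - pr.2 * a) = ↑pr.1 := by ring
        rw [this]
        exact pr.1.isUnit
      · rw [psi_00, psi_01, psi_10, psi_11]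
        ring
    · -- left inverse
      intro s hs
      obtain ⟨-, hcongr, hu, he⟩ := Finset.mem_filter.mp hs
      have hents := sl2_entries a b s hu.unit hu.unit_spec he
      apply Subtype.ext
      apply Matrix.ext
      simp only [Fin.forall_fin_two]
      refine ⟨⟨?_, ?_⟩, ?_, ?_⟩
      · rw [psi_00]; exact hents.1.symm
      · rw [psi_01]; exact hents.2.1.symm
      · rw [psi_10]
      · rw [psi_11]; exact hents.2.2.symm
    · -- right inverse
      intro pr hpr
      refine Prod.ext ?_ rfl
      apply Units.ext
      rw [IsUnit.unit_spec, psi_10, psi_11]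
      ring
  rw [hcount]
  have hSsplit : S.card
      = (univ.filter fun u : (ZMod q)ˣ => ZMod.unitsMap hQ u = ubar).card
        * (univ.filter fun t : ZMod q =>
            ZMod.castHom hQ (ZMod Q) t = (sbar : Matrix (Fin 2) (Fin 2) (ZMod Q)) 1 0).card := by
    rw [hSdef, ← Finset.univ_product_univ]
    rw [Finset.filter_product (fun u : (ZMod q)ˣ => ZMod.unitsMap hQ u = ubar)
      (fun t : ZMod q =>
        ZMod.castHom hQ (ZMod Q) t = (sbar : Matrix (Fin 2) (Fin 2) (ZMod Q)) 1 0)]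
    rw [Finset.card_product]
  have hU : (univ.filter fun u : (ZMod q)ˣ => ZMod.unitsMap hQ u = ubar).card
      * Q.totient = q.totient := by
    have h := fiber_card_mul (ZMod.unitsMap hQ) (ZMod.unitsMap_surjective hQ) ubar
    rwa [ZMod.card_units_eq_totient, ZMod.card_units_eq_totient] at h
  have hT : (univ.filter fun t : ZMod q =>
      ZMod.castHom hQ (ZMod Q) t = (sbar : Matrix (Fin 2) (Fin 2) (ZMod Q)) 1 0).card
      * Q = q := by
    have h := fiber_card_add (fun x : ZMod q => ZMod.castHom hQ (ZMod Q) x)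
      (fun x y => map_add _ x y) (ZMod.ringHom_surjective _)
      ((sbar : Matrix (Fin 2) (Fin 2) (ZMod Q)) 1 0)
    rwa [ZMod.card, ZMod.card] at h
  -- final arithmetic
  set cU := (univ.filter fun u : (ZMod q)ˣ => ZMod.unitsMap hQ u = ubar).card
  set cT := (univ.filter fun t : ZMod q =>
    ZMod.castHom hQ (ZMod Q) t = (sbar : Matrix (Fin 2) (Fin 2) (ZMod Q)) 1 0).card
  have key : cU * cT * (Q * Q * Q.totient) = q₁ * q₁ * q₂ * q₂.totient * Q.totient := by
    calc cU * cT * (Q * Q * Q.totient) = (cU * Q.totient) * (cT * Q) * Q := by ring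
    _ = q.totient * q * Q := by rw [hU, hT]
    _ = (q₁.totient * q₂.totient) * (q₁ * q₂) * Q := by rw [htot, ← hqmul]
    _ = (q₁.totient * Q) * (q₂ * q₂.totient * q₁) := by ring
    _ = (Q.totient * q₁) * (q₂ * q₂.totient * q₁) := by rw [hratio]
    _ = q₁ * q₁ * q₂ * q₂.totient * Q.totient := by ring
  have hQR : (Q : ℝ) ≠ 0 := Nat.cast_ne_zero.mpr hQ0
  have hφQR : (Q.totient : ℝ) ≠ 0 := by
    have : 0 < Q.totient := Nat.totient_pos.mpr (Nat.pos_of_ne_zero hQ0)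
    exact Nat.cast_ne_zero.mpr this.ne'
  have keyR : (cU : ℝ) * cT * ((Q : ℝ) * Q * Q.totient)
      = (q₁ : ℝ) * q₁ * q₂ * q₂.totient * Q.totient := by exact_mod_cast key
  rw [hSsplit]
  push_cast
  rw [div_pow]
  rw [div_mul_eq_mul_div, div_mul_eq_mul_div, eq_div_iff (by positivity)]
  refine mul_right_cancel₀ hφQR ?_
  linear_combination keyR
end
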